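/- arXiv:1811.08261 — 4 statements merged into one kernel-verified Lean document; each statement's English description precedes it below -/
import Mathlib

section
/- For any nonnegative integer k and positive integer l, the single sum ∑_{j≥0} x^j q^{lj + k j(j-1)/2} / (q; q)_j equals the double sum ∑_{m,n≥0} x^{m+n} q^{Q_{k,l}(m,n)} / ((q; q)_m (q^2; q^2)_{⌊n/2⌋}), where Q_{k,l}(m,n) = (m+n)l + k n(n-1)/2 + (n-1)mk + (k+1)m(m+1)/2. -/
open Finset

/-- Finite q-Pochhammer symbol `(a; q)_n = ∏_{j=0}^{n-1} (1 - a q^j)`. -/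
noncomputable def qPoch (a q : ℂ) (n : ℕ) : ℂ := ∏ j ∈ Finset.range n, (1 - a * q ^ j)

/-- Infinite q-Pochhammer symbol `(a; q)_∞`. -/
noncomputable def qPochInf (a q : ℂ) : ℂ := ∏' j : ℕ, (1 - a * q ^ j)

/-- Gaussian binomial coefficient `[a choose b]_q`, equal to
`(q;q)_a / ((q;q)_b (q;q)_{a-b})` when `a ≥ b ≥ 0`, and `0` otherwise. -/
noncomputable def qbinom (q : ℂ) (a b : ℤ) : ℂ :=
  if 0 ≤ b ∧ b ≤ a then
    qPoch q q a.toNat / (qPoch q q b.toNat * qPoch q q (a - b).toNat)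
  else 0

/-- `Q_{k,l}(m,n) = (m+n)l + k n(n-1)/2 + (n-1)mk + (k+1)m(m+1)/2` (an integer). -/
noncomputable def Qkl (k l m n : ℕ) : ℤ :=
  ((m : ℤ) + n) * l + k * (n * ((n : ℤ) - 1)) / 2 + ((n : ℤ) - 1) * m * k
    + ((k : ℤ) + 1) * (m * ((m : ℤ) + 1)) / 2

lemma qPoch_succ (a q : ℂ) (n : ℕ) : qPoch a q (n+1) = qPoch a q n * (1 - a * q ^ n) :=
  Finset.prod_range_succ _ _

lemma one_sub_pow_ne {q : ℂ} (hq : ‖q‖ < 1) (i : ℕ) (hi : i ≠ 0) : 1 - q ^ i ≠ 0 := by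
  intro h
  have h1 : q ^ i = 1 := by linear_combination -h
  have h2 : ‖q ^ i‖ < 1 := by
    rw [norm_pow]; exact pow_lt_one₀ (norm_nonneg q) hq hi
  rw [h1] at h2; simp at h2

lemma qPoch_q_ne {q : ℂ} (hq : ‖q‖ < 1) (n : ℕ) : qPoch q q n ≠ 0 := by
  rw [qPoch]
  apply Finset.prod_ne_zero_iff.mpr
  intro i _
  have h : (1 : ℂ) - q * q ^ i = 1 - q ^ (i+1) := by ring
  rw [h]
  exact one_sub_pow_ne hq (i+1) (Nat.succ_ne_zero i)

lemma norm_sq_lt {q : ℂ} (hq : ‖q‖ < 1) : ‖q^2‖ < 1 := by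
  rw [norm_pow]; exact pow_lt_one₀ (norm_nonneg q) hq two_ne_zero

lemma qPoch_q2_ne {q : ℂ} (hq : ‖q‖ < 1) (n : ℕ) : qPoch (q^2) (q^2) n ≠ 0 :=
  qPoch_q_ne (norm_sq_lt hq) n

noncomputable def aa (q : ℂ) (m : ℕ) : ℂ := q ^ (m*(m+1)/2) / qPoch q q m

noncomputable def bb (q : ℂ) (t : ℕ) : ℂ := 1 / qPoch (q^2) (q^2) t

lemma tri (m : ℕ) : (m+1)*(m+2)/2 = m*(m+1)/2 + (m+1) := by
  obtain ⟨b, hb⟩ := Nat.even_mul_succ_self m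
  have h2 : m*(m+1) = 2*b := by omega
  have hx : (m+1)*(m+2) = m*(m+1) + 2*(m+1) := by ring
  have h3 : (m+1)*(m+2) = 2*(b + (m+1)) := by omega
  rw [h2, h3, Nat.mul_div_cancel_left _ two_pos, Nat.mul_div_cancel_left _ two_pos]

lemma arec {q : ℂ} (hq : ‖q‖ < 1) (m : ℕ) :
    aa q (m+1) * (1 - q^(m+1)) = aa q m * q^(m+1) := by
  rw [aa, aa, qPoch_succ, tri, pow_add]
  have h : (1 : ℂ) - q * q ^ m = 1 - q ^ (m+1) := by ring
  rw [h]
  have h1 := qPoch_q_ne hq m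
  have h2 := one_sub_pow_ne hq (m+1) (Nat.succ_ne_zero m)
  field_simp

lemma brec {q : ℂ} (hq : ‖q‖ < 1) (t : ℕ) :
    bb q (t+1) * (1 - q^(2*t+2)) = bb q t := by
  rw [bb, bb, qPoch_succ]
  have h : (1 : ℂ) - q^2 * (q^2) ^ t = 1 - q ^ (2*t+2) := by rw [← pow_mul]; ring
  rw [h]
  have h1 := qPoch_q2_ne hq t
  have h2 := one_sub_pow_ne hq (2*t+2) (by omega)
  field_simp
noncomputable def DD (q : ℂ) (n : ℕ) : ℂ := (if Even n then q^n else 0) * bb q (n/2)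

lemma bdiff {q : ℂ} (hq : ‖q‖ < 1) (n : ℕ) :
    bb q ((n+1)/2) - bb q (n/2) = DD q (n+1) := by
  rcases Nat.even_or_odd n with ⟨s, hs⟩ | ⟨s, hs⟩
  · have h1 : (n+1)/2 = n/2 := by omega
    have h2 : ¬ Even (n+1) := by
      rw [Nat.even_add_one]; rw [Nat.even_iff]; omega
    rw [DD, if_neg h2, h1]; ring
  · have h1 : (n+1)/2 = s+1 := by omega
    have h2 : n/2 = s := by omega
    have h3 : Even (n+1) := by rw [Nat.even_iff]; omega
    rw [DD, if_pos h3, h1, h2]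
    have hb := brec hq s
    have hn : n + 1 = 2*s+2 := by omega
    rw [hn]
    linear_combination hb

lemma pairSum (g : ℕ → ℂ) (M : ℕ) (h : ∀ t, t < M → g (2*t) + g (2*t+1) = 0) :
    ∑ n ∈ Finset.range (2*M), g n = 0 := by
  induction M with
  | zero => simp
  | succ M ih =>
    have h2 : 2*(M+1) = (2*M+1)+1 := by ring
    rw [h2, Finset.sum_range_succ, Finset.sum_range_succ,
      ih (fun t ht => h t (by omega)), zero_add]
    exact h M (by omega)

noncomputable def SS (q : ℂ) (j : ℕ) : ℂ := ∑ m ∈ Finset.range (j+1), aa q m * bb q ((j-m)/2)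

lemma step {q : ℂ} (hq : ‖q‖ < 1) (j : ℕ) :
    SS q (j+1) * (1 - q^(j+1)) = SS q j := by
  have h1 : SS q (j+1) - SS q j = ∑ m ∈ Finset.range (j+2), aa q m * DD q (j+1-m) := by
    rw [show j+2 = (j+1)+1 from rfl, Finset.sum_range_succ]
    have hlast : aa q (j+1) * DD q (j+1-(j+1)) = aa q (j+1) * bb q 0 := by
      simp [DD]
    rw [hlast, SS, SS, Finset.sum_range_succ]
    have hsimp : (j+1-(j+1))/2 = 0 := by omega
    rw [hsimp]
    have hcong : ∀ m ∈ Finset.range (j+1),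
        aa q m * DD q (j+1-m) = aa q m * bb q ((j+1-m)/2) - aa q m * bb q ((j-m)/2) := by
      intro m hm
      rw [Finset.mem_range] at hm
      have hn : j+1-m = (j-m)+1 := by omega
      rw [hn, ← bdiff hq (j-m)]
      ring
    rw [Finset.sum_congr rfl hcong, Finset.sum_sub_distrib]
    ring
  have h2 : ∑ m ∈ Finset.range (j+2),
      aa q m * (DD q (j+1-m) - q^(j+1) * bb q ((j+1-m)/2)) = 0 := by
    rw [← Finset.sum_range_reflect]
    set g : ℕ → ℂ := fun n => aa q (j+1-n) * (DD q n - q^(j+1) * bb q (n/2)) with hg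
    have hcong : ∀ n ∈ Finset.range (j+2),
        aa q (j+2-1-n) * (DD q (j+1-(j+2-1-n)) - q^(j+1) * bb q ((j+1-(j+2-1-n))/2)) = g n := by
      intro n hn
      rw [Finset.mem_range] at hn
      have e1 : j+2-1-n = j+1-n := by omega
      have e2 : j+1-(j+1-n) = n := by omega
      rw [e1, e2]
    rw [Finset.sum_congr rfl hcong]
    have hpair : ∀ t, 2*t ≤ j → g (2*t) + g (2*t+1) = 0 := by
      intro t ht
      have e1 : (2*t)/2 = t := by omega
      have e2 : (2*t+1)/2 = t := by omega
      have e3 : Even (2*t) := ⟨t, by omega⟩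
      have e4 : ¬ Even (2*t+1) := by rw [Nat.even_iff]; omega
      have e5 : j+1-(2*t) = (j-2*t)+1 := by omega
      have e6 : j+1-(2*t+1) = j-2*t := by omega
      rw [hg]
      simp only [DD, if_pos e3, if_neg e4, e1, e2, e5, e6]
      have hMr := arec hq (j-2*t)
      have hj1 : j+1 = ((j-2*t)+1) + 2*t := by omega
      rw [hj1, pow_add]
      linear_combination (q^(2*t) * bb q t) * hMr
    rcases Nat.even_or_odd j with ⟨r, hr⟩ | ⟨r, hr⟩
    · rw [show j+2 = 2*(r+1) from by omega]
      exact pairSum g (r+1) (fun t ht => hpair t (by omega))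
    · rw [show j+2 = 2*(r+1)+1 from by omega, Finset.sum_range_succ,
        pairSum g (r+1) (fun t ht => hpair t (by omega)), zero_add]
      have e3 : Even (2*(r+1)) := ⟨r+1, by omega⟩
      have e5 : j+1-2*(r+1) = 0 := by omega
      have e6 : j+1 = 2*(r+1) := by omega
      have e7 : 2*(r+1)/2 = r+1 := by omega
      show aa q (j + 1 - 2 * (r + 1)) * (DD q (2 * (r + 1)) - q ^ (j + 1) * bb q (2 * (r + 1) / 2)) = 0
      simp only [DD, if_pos e3, e5, e6, e7]
      ring
  have e1 : ∑ m ∈ Finset.range (j+2),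
      aa q m * (DD q (j+1-m) - q^(j+1) * bb q ((j+1-m)/2))
      = (∑ m ∈ Finset.range (j+2), aa q m * DD q (j+1-m)) - q^(j+1) * SS q (j+1) := by
    rw [SS, Finset.mul_sum, ← Finset.sum_sub_distrib]
    apply Finset.sum_congr rfl
    intro m hm
    ring
  linear_combination h1 - e1 + h2

lemma SS_mul {q : ℂ} (hq : ‖q‖ < 1) (j : ℕ) : SS q j * qPoch q q j = 1 := by
  induction j with
  | zero => simp [SS, aa, bb, qPoch]
  | succ j ih =>
    have hp : qPoch q q (j+1) = qPoch q q j * (1 - q^(j+1)) := by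
      rw [qPoch_succ]; ring_nf
    rw [hp, show SS q (j+1) * (qPoch q q j * (1 - q^(j+1)))
        = (SS q (j+1) * (1 - q^(j+1))) * qPoch q q j from by ring, step hq j, ih]
noncomputable def EE (k l m n : ℕ) : ℕ :=
  l*(m+n) + k*((m+n)*((m+n)-1)/2) + m*(m+1)/2

lemma Qkl_eq (k l m n : ℕ) : Qkl k l m n = (EE k l m n : ℤ) := by
  obtain ⟨A, hA⟩ := Int.even_mul_succ_self ((n:ℤ)-1)
  have hA' : (n:ℤ)*((n:ℤ)-1) = 2*A := by linear_combination hA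
  obtain ⟨b, hb⟩ := Nat.even_mul_succ_self m
  have hb2 : m*(m+1)/2 = b := by omega
  have hB' : (m:ℤ)*((m:ℤ)+1) = 2*(b:ℤ) := by
    have h := hb; zify at h; linarith
  rcases Nat.eq_zero_or_pos (m+n) with h0 | hpos
  · have hm : m = 0 := by omega
    have hn : n = 0 := by omega
    subst hm; subst hn
    norm_num [Qkl, EE]
  · obtain ⟨c, hc⟩ := Nat.even_mul_succ_self (m+n-1)
    have hc2 : (m+n)*((m+n)-1)/2 = c := by
      have h1 : (m+n)*((m+n)-1) = (m+n-1)*((m+n-1)+1) := by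
        rw [Nat.mul_comm]
        congr 1
        omega
      omega
    have hC' : ((m:ℤ)+n)*((m:ℤ)+n-1) = 2*(c:ℤ) := by
      have h := hc
      zify [Nat.one_le_iff_ne_zero.mpr (by omega : m+n ≠ 0)] at h
      linear_combination h
    rw [Qkl, EE]
    have L1 : (k:ℤ)*((n:ℤ)*((n:ℤ)-1))/2 = (k:ℤ)*A := by
      rw [hA', show (k:ℤ)*(2*A) = 2*((k:ℤ)*A) by ring]
      exact Int.mul_ediv_cancel_left _ two_ne_zero
    have L2 : ((k:ℤ)+1)*((m:ℤ)*((m:ℤ)+1))/2 = ((k:ℤ)+1)*b := by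
      rw [hB', show ((k:ℤ)+1)*(2*(b:ℤ)) = 2*(((k:ℤ)+1)*b) by ring]
      exact Int.mul_ediv_cancel_left _ two_ne_zero
    rw [L1, L2, hb2, hc2]
    push_cast
    refine mul_left_cancel₀ (two_ne_zero : (2:ℤ) ≠ 0) ?_
    linear_combination (-(k:ℤ))*hA' + (-(k:ℤ))*hB' + (k:ℤ)*hC'
lemma diag {q : ℂ} (hq : ‖q‖ < 1) (x : ℂ) (k l j : ℕ) :
    ∑ p ∈ Finset.HasAntidiagonal.antidiagonal j,
        x ^ (p.1 + p.2) * q ^ (EE k l p.1 p.2) / (qPoch q q p.1 * qPoch (q^2) (q^2) (p.2/2))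
      = x ^ j * q ^ (l * j + k * (j * (j - 1) / 2)) / qPoch q q j := by
  rw [Finset.Nat.sum_antidiagonal_eq_sum_range_succ_mk]
  have hterm : ∀ m ∈ Finset.range (j+1),
      x ^ (m + (j-m)) * q ^ (EE k l m (j-m)) / (qPoch q q m * qPoch (q^2) (q^2) ((j-m)/2))
        = (x ^ j * q ^ (l * j + k * (j * (j - 1) / 2))) * (aa q m * bb q ((j-m)/2)) := by
    intro m hm
    rw [Finset.mem_range] at hm
    have h1 : m + (j - m) = j := by omega
    have h2 : EE k l m (j-m) = (l * j + k * (j * (j - 1) / 2)) + m*(m+1)/2 := by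
      rw [EE, h1]
    rw [h1, h2, pow_add, aa, bb]
    ring
  rw [Finset.sum_congr rfl hterm, ← Finset.mul_sum]
  have hS : ∑ m ∈ Finset.range (j+1), aa q m * bb q ((j-m)/2) = SS q j := rfl
  rw [hS, eq_div_iff (qPoch_q_ne hq j)]
  linear_combination (x ^ j * q ^ (l * j + k * (j * (j - 1) / 2))) * SS_mul hq j
lemma weier (a : ℕ → ℝ) (h0 : ∀ i, 0 ≤ a i) (h1 : ∀ i, a i ≤ 1) (N : ℕ) :
    1 - ∑ i ∈ Finset.range N, a i ≤ ∏ i ∈ Finset.range N, (1 - a i) := by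
  induction N with
  | zero => simp
  | succ N ih =>
    rw [Finset.prod_range_succ, Finset.sum_range_succ]
    have hp : (0:ℝ) ≤ ∏ i ∈ Finset.range N, (1 - a i) :=
      Finset.prod_nonneg fun i _ => by linarith [h1 i]
    have hs : (0:ℝ) ≤ ∑ i ∈ Finset.range N, a i :=
      Finset.sum_nonneg fun i _ => h0 i
    nlinarith [h0 N, h1 N]

lemma pochLB {c : ℝ} (h0 : 0 ≤ c) (h1 : c < 1) :
    ∃ P : ℝ, 0 < P ∧ ∀ n, P ≤ ∏ i ∈ Finset.range n, (1 - c^(i+1)) := by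
  obtain ⟨N, hN⟩ := exists_pow_lt_of_lt_one (show (0:ℝ) < (1-c)/2 by linarith) h1
  have hc0 : (0:ℝ) < 1 - c := by linarith
  refine ⟨(1-c)^N * (1/2), mul_pos (pow_pos hc0 N) one_half_pos, ?_⟩
  intro n
  have hfac : ∀ i : ℕ, 1 - c ≤ 1 - c^(i+1) := by
    intro i
    have : c^(i+1) ≤ c := pow_le_of_le_one h0 h1.le (Nat.succ_ne_zero i)
    linarith
  have hfac0 : ∀ i : ℕ, (0:ℝ) ≤ 1 - c^(i+1) := by
    intro i
    have : c^(i+1) < 1 := pow_lt_one₀ h0 h1 (Nat.succ_ne_zero i)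
    linarith
  rcases le_or_gt n N with h | h
  · have h2 : (1-c)^n ≤ ∏ i ∈ Finset.range n, (1 - c^(i+1)) := by
      have h := Finset.prod_le_prod (s := Finset.range n) (f := fun _ => 1 - c)
        (g := fun i => 1 - c^(i+1)) (fun i _ => by simpa using hc0.le)
        (fun i _ => by simpa using hfac i)
      simpa using h
    have h3 : (1-c)^N ≤ (1-c)^n := pow_le_pow_of_le_one (by linarith) (by linarith) h
    nlinarith [pow_nonneg (show (0:ℝ) ≤ 1-c by linarith) N]
  · rw [show n = N + (n - N) by omega, Finset.prod_range_add]
    have h2 : (1-c)^N ≤ ∏ i ∈ Finset.range N, (1 - c^(i+1)) := by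
      have h := Finset.prod_le_prod (s := Finset.range N) (f := fun _ => 1 - c)
        (g := fun i => 1 - c^(i+1)) (fun i _ => by simpa using hc0.le)
        (fun i _ => by simpa using hfac i)
      simpa using h
    have h4 : (1/2 : ℝ) ≤ ∏ i ∈ Finset.range (n-N), (1 - c^(N+i+1)) := by
      have hw := weier (fun i => c^(N+i+1)) (fun i => pow_nonneg h0 _)
        (fun i => (pow_lt_one₀ h0 h1 (Nat.succ_ne_zero _)).le) (n-N)
      have hsum : ∑ i ∈ Finset.range (n-N), c^(N+i+1) ≤ 1/2 := by
        have he : ∀ i ∈ Finset.range (n-N), c^(N+i+1) = c^N * (c * c^i) := by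
          intro i _
          rw [show N+i+1 = N + (1+i) by omega, pow_add, pow_add, pow_one]
        rw [Finset.sum_congr rfl he, ← Finset.mul_sum]
        have hgs : ∑ i ∈ Finset.range (n-N), (c * c^i) ≤ c * (1-c)⁻¹ := by
          rw [← Finset.mul_sum]
          have : ∑ i ∈ Finset.range (n-N), c^i ≤ (1-c)⁻¹ := by
            have hle := Summable.sum_le_tsum (Finset.range (n-N)) (fun i _ => pow_nonneg h0 i)
              (summable_geometric_of_lt_one h0 h1)
            rwa [tsum_geometric_of_lt_one h0 h1] at hle
          exact mul_le_mul_of_nonneg_left this h0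
        have hc1 : c * (1-c)⁻¹ ≤ (1-c)⁻¹ := by
          have : (0:ℝ) < (1-c)⁻¹ := inv_pos.mpr hc0
          nlinarith
        have hcne : (1-c) ≠ 0 := by linarith
        have hN2 : c^N * (1-c)⁻¹ ≤ 1/2 := by
          rw [show (1/2 : ℝ) = ((1-c)/2) * (1-c)⁻¹ by field_simp]
          exact mul_le_mul_of_nonneg_right hN.le (by positivity)
        calc c^N * ∑ i ∈ Finset.range (n-N), (c * c^i)
            ≤ c^N * ((1-c)⁻¹) := by
              refine mul_le_mul_of_nonneg_left ?_ (pow_nonneg h0 N)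
              exact le_trans hgs hc1
          _ ≤ 1/2 := hN2
      linarith
    have hb : ∀ i ∈ Finset.range (n-N), (0:ℝ) ≤ 1 - c^(N+i+1) := fun i _ => hfac0 _
    have hfin := mul_le_mul h2 h4 (by norm_num) (Finset.prod_nonneg fun i _ => hfac0 i)
    simpa using hfin

lemma qPoch_norm_lb {q : ℂ} (hq : ‖q‖ < 1) :
    ∃ P : ℝ, 0 < P ∧ ∀ n, P ≤ ‖qPoch q q n‖ ∧ P ≤ ‖qPoch (q^2) (q^2) n‖ := by
  obtain ⟨P, hP, hPle⟩ := pochLB (norm_nonneg q) hq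
  refine ⟨P, hP, fun n => ⟨?_, ?_⟩⟩
  · refine le_trans (hPle n) ?_
    rw [qPoch, norm_prod]
    apply Finset.prod_le_prod
    · intro i _
      have : ‖q‖^(i+1) < 1 := pow_lt_one₀ (norm_nonneg q) hq (Nat.succ_ne_zero i)
      linarith
    · intro i _
      have h1 : ‖(1:ℂ)‖ - ‖q * q^i‖ ≤ ‖1 - q * q^i‖ := norm_sub_norm_le _ _
      have h2 : ‖q * q^i‖ = ‖q‖^(i+1) := by
        rw [norm_mul, norm_pow, pow_succ']
      rw [norm_one] at h1
      linarith
  · refine le_trans (hPle n) ?_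
    rw [qPoch, norm_prod]
    apply Finset.prod_le_prod
    · intro i _
      have : ‖q‖^(i+1) < 1 := pow_lt_one₀ (norm_nonneg q) hq (Nat.succ_ne_zero i)
      linarith
    · intro i _
      have h1 : ‖(1:ℂ)‖ - ‖q^2 * (q^2)^i‖ ≤ ‖1 - q^2 * (q^2)^i‖ := norm_sub_norm_le _ _
      have h2 : ‖q^2 * (q^2)^i‖ = ‖q‖^(2*(i+1)) := by
        rw [norm_mul, norm_pow, norm_pow, norm_pow, ← pow_mul, ← pow_add]
        congr 1
        ring
      have h3 : ‖q‖^(2*(i+1)) ≤ ‖q‖^(i+1) :=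
        pow_le_pow_of_le_one (norm_nonneg q) hq.le (by omega)
      rw [norm_one] at h1
      linarith
set_option maxHeartbeats 1000000 in
lemma summ {q x : ℂ} (hq : ‖q‖ < 1) (hx : ‖x‖ < 1) (k l : ℕ) :
    Summable (fun p : ℕ × ℕ => x ^ (p.1 + p.2) * q ^ (EE k l p.1 p.2)
      / (qPoch q q p.1 * qPoch (q^2) (q^2) (p.2/2))) := by
  obtain ⟨P, hP, hPle⟩ := qPoch_norm_lb hq
  have hs : Summable (fun i : ℕ => P⁻¹ * ‖x‖ ^ i) :=
    (summable_geometric_of_lt_one (norm_nonneg x) hx).mul_left _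
  have h0 : (0 : ℕ → ℝ) ≤ fun i : ℕ => P⁻¹ * ‖x‖ ^ i := fun i => by positivity
  have hgsum : Summable (fun p : ℕ × ℕ => (P⁻¹ * ‖x‖ ^ p.1) * (P⁻¹ * ‖x‖ ^ p.2)) :=
    Summable.mul_of_nonneg hs hs h0 h0
  apply Summable.of_norm_bounded hgsum
  rintro ⟨m, n⟩
  have h1 : ‖x ^ (m+n) * q ^ (EE k l m n) / (qPoch q q m * qPoch (q^2) (q^2) (n/2))‖
      = (‖x‖^m * ‖x‖^n * ‖q‖^(EE k l m n))
        / (‖qPoch q q m‖ * ‖qPoch (q^2) (q^2) (n/2)‖) := by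
    rw [norm_div, norm_mul, norm_mul, norm_pow, norm_pow, pow_add]
  rw [h1]
  have hq1 : ‖q‖ ^ (EE k l m n) ≤ 1 := pow_le_one₀ (norm_nonneg q) hq.le
  have hnum : ‖x‖^m * ‖x‖^n * ‖q‖^(EE k l m n) ≤ ‖x‖^m * ‖x‖^n := by
    have h0' : (0:ℝ) ≤ ‖x‖^m * ‖x‖^n := by positivity
    exact mul_le_of_le_one_right h0' hq1
  have hden : P * P ≤ ‖qPoch q q m‖ * ‖qPoch (q^2) (q^2) (n/2)‖ :=
    mul_le_mul (hPle m).1 (hPle (n/2)).2 hP.le (norm_nonneg _)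
  have hPne : P ≠ 0 := ne_of_gt hP
  calc (‖x‖^m * ‖x‖^n * ‖q‖^(EE k l m n))
        / (‖qPoch q q m‖ * ‖qPoch (q^2) (q^2) (n/2)‖)
      ≤ (‖x‖^m * ‖x‖^n) / (P * P) :=
        div_le_div₀ (by positivity) hnum (mul_pos hP hP) hden
    _ = (P⁻¹ * ‖x‖^m) * (P⁻¹ * ‖x‖^n) := by field_simp

set_option maxHeartbeats 1000000 in
/-- single-sum = double-sum representation for partitions with
uniform gap conditions. -/
theorem stmt1 (k l : ℕ) (hl : 0 < l) (q x : ℂ) (hq0 : q ≠ 0) (hq : ‖q‖ < 1)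
    (hx : ‖x‖ < 1) :
    ∑' j : ℕ, x ^ j * q ^ (l * j + k * (j * (j - 1) / 2)) / qPoch q q j
      = ∑' p : ℕ × ℕ, x ^ (p.1 + p.2) * q ^ (Qkl k l p.1 p.2)
          / (qPoch q q p.1 * qPoch (q ^ 2) (q ^ 2) (p.2 / 2)) := by
  have hrw : ∀ p : ℕ × ℕ,
      x ^ (p.1 + p.2) * q ^ (Qkl k l p.1 p.2)
          / (qPoch q q p.1 * qPoch (q ^ 2) (q ^ 2) (p.2 / 2))
        = x ^ (p.1 + p.2) * q ^ (EE k l p.1 p.2)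
          / (qPoch q q p.1 * qPoch (q ^ 2) (q ^ 2) (p.2 / 2)) := by
    intro p
    rw [Qkl_eq, zpow_natCast]
  rw [tsum_congr hrw]
  set f : ℕ × ℕ → ℂ := fun p => x ^ (p.1 + p.2) * q ^ (EE k l p.1 p.2)
      / (qPoch q q p.1 * qPoch (q ^ 2) (q ^ 2) (p.2 / 2)) with hf
  have hsum : Summable f := summ hq hx k l
  have hsum2 : Summable (fun σ : Σ j : ℕ, Finset.HasAntidiagonal.antidiagonal j =>
      f (Finset.HasAntidiagonal.sigmaAntidiagonalEquivProd σ)) :=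
    (Equiv.summable_iff _).mpr hsum
  calc ∑' j : ℕ, x ^ j * q ^ (l * j + k * (j * (j - 1) / 2)) / qPoch q q j
      = ∑' j : ℕ, ∑ p ∈ Finset.HasAntidiagonal.antidiagonal j, f p :=
        tsum_congr fun j => (diag hq x k l j).symm
    _ = ∑' j : ℕ, ∑' c : (Finset.HasAntidiagonal.antidiagonal j : Finset (ℕ × ℕ)), f c :=
        tsum_congr fun j => (Finset.tsum_subtype _ f).symm
    _ = ∑' σ : Σ j : ℕ, Finset.HasAntidiagonal.antidiagonal j, f (Finset.HasAntidiagonal.sigmaAntidiagonalEquivProd σ) :=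
        (Summable.tsum_sigma hsum2).symm
    _ = ∑' p : ℕ × ℕ, f p := (Finset.HasAntidiagonal.sigmaAntidiagonalEquivProd (A := ℕ)).tsum_eq f
end

section
/- For any nonnegative integers N and k, and positive integer l with N ≥ l, the polynomial identity holds: ∑_{j≥0} x^j q^{lj + kj(j-1)/2} [N - l - (j-1)k + j choose j]_q = ∑_{m,n≥0} x^{m+n} q^{Q_{k,l}(m,n)} [N - (l + (n-1)k + m(k+1)) + m choose m]_q [N - (l + (n-1)k) - km + ⌊n/2⌋ choose ⌊n/2⌋]_{q^2}, where Q_{k,l}(m,n) = (m+n)l + k n(n-1)/2 + (n-1)mk + (k+1)m(m+1)/2. -/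
open Finset

namespace Stmt2Aux

open PowerSeries

/-- natural-index Gaussian binomial -/
noncomputable def nqb (u : ℂ) (a b : ℕ) : ℂ :=
  if b ≤ a then qPoch u u a / (qPoch u u b * qPoch u u (a - b)) else 0

lemma qPoch_zero (u : ℂ) : qPoch u u 0 = 1 := Finset.prod_range_zero _

lemma qPoch_succ (u : ℂ) (n : ℕ) : qPoch u u (n + 1) = qPoch u u n * (1 - u * u ^ n) :=
  Finset.prod_range_succ _ _

lemma qPoch_ne_zero {u : ℂ} (hu : ‖u‖ < 1) (n : ℕ) : qPoch u u n ≠ 0 := by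
  apply Finset.prod_ne_zero_iff.2
  intro i _ h
  have h1 : u * u ^ i = 1 := by linear_combination -h
  have h2 : ‖u * u ^ i‖ = 1 := by rw [h1]; simp
  have h3 : ‖u * u ^ i‖ ≤ ‖u‖ := by
    rw [norm_mul, norm_pow]
    calc ‖u‖ * ‖u‖ ^ i ≤ ‖u‖ * 1 := by
          apply mul_le_mul_of_nonneg_left _ (norm_nonneg u)
          exact pow_le_one₀ (norm_nonneg u) hu.le
      _ = ‖u‖ := mul_one _
  linarith

lemma qbinom_natCast (u : ℂ) (a b : ℕ) : qbinom u (a : ℤ) (b : ℤ) = nqb u a b := by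
  unfold qbinom nqb
  by_cases h : b ≤ a
  · rw [if_pos ⟨Int.ofNat_nonneg b, by exact_mod_cast h⟩, if_pos h]
    have h1 : ((a : ℤ) - (b : ℤ)).toNat = a - b := by omega
    simp [h1]
  · rw [if_neg (by push_neg; intro _; exact_mod_cast lt_of_not_ge h), if_neg h]

lemma qbinom_neg (u : ℂ) (a b : ℤ) (h : a < b) : qbinom u a b = 0 := by
  unfold qbinom; rw [if_neg]; rintro ⟨h1, h2⟩; omega

lemma nqb_zero_right {u : ℂ} (hP : ∀ n, qPoch u u n ≠ 0) (a : ℕ) : nqb u a 0 = 1 := by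
  unfold nqb
  rw [if_pos (Nat.zero_le a)]
  simp [qPoch_zero, div_self (hP a)]

lemma nqb_self {u : ℂ} (hP : ∀ n, qPoch u u n ≠ 0) (a : ℕ) : nqb u a a = 1 := by
  unfold nqb
  rw [if_pos le_rfl]
  simp [qPoch_zero, div_self (hP a)]

lemma nqb_of_lt (u : ℂ) {a b : ℕ} (h : a < b) : nqb u a b = 0 := by
  unfold nqb; rw [if_neg (by omega)]

/-- Pascal 1: `[a+1, b+1] = [a, b+1] + u^(a-b) [a, b]`. -/
lemma pascal1 {u : ℂ} (hP : ∀ n, qPoch u u n ≠ 0) (a b : ℕ) :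
    nqb u (a + 1) (b + 1) = nqb u a (b + 1) + u ^ (a - b) * nqb u a b := by
  rcases lt_trichotomy a b with h | rfl | h
  · rw [nqb_of_lt u (by omega), nqb_of_lt u (by omega), nqb_of_lt u h]
    ring
  · rw [nqb_self hP, nqb_self hP, nqb_of_lt u (by omega)]
    simp
  · obtain ⟨c, rfl⟩ : ∃ c, a = b + 1 + c := ⟨a - (b + 1), by omega⟩
    unfold nqb
    rw [if_pos (by omega), if_pos (by omega), if_pos (by omega)]
    have e1 : b + 1 + c + 1 - (b + 1) = c + 1 := by omega
    have e2 : b + 1 + c - (b + 1) = c := by omega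
    have e3 : b + 1 + c - b = c + 1 := by omega
    rw [e1, e2, e3]
    rw [show b + 1 + c + 1 = (b + 1 + c) + 1 from rfl, qPoch_succ u (b + 1 + c),
      qPoch_succ u b, qPoch_succ u c]
    have hb := hP b
    have hc := hP c
    have hbc := hP (b + 1 + c)
    have h1 : (1 - u * u ^ b) ≠ 0 := by
      intro h0; exact hP (b+1) (by rw [qPoch_succ, h0, mul_zero])
    have h2 : (1 - u * u ^ c) ≠ 0 := by
      intro h0; exact hP (c+1) (by rw [qPoch_succ, h0, mul_zero])
    have hbc' : qPoch u u (b + 1 + c) = qPoch u u (b + c) * (1 - u * u ^ (b + c)) := by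
      rw [show b + 1 + c = (b + c) + 1 by omega, qPoch_succ]
    rw [hbc']
    have hqbc := hP (b + c)
    field_simp
    ring_nf

/-- Pascal 2: `[a+1, b+1] = u^(b+1) [a, b+1] + [a, b]`. -/
lemma pascal2 {u : ℂ} (hP : ∀ n, qPoch u u n ≠ 0) (a b : ℕ) :
    nqb u (a + 1) (b + 1) = u ^ (b + 1) * nqb u a (b + 1) + nqb u a b := by
  rcases lt_trichotomy a b with h | rfl | h
  · rw [nqb_of_lt u (by omega), nqb_of_lt u (by omega), nqb_of_lt u h]
    ring
  · rw [nqb_self hP, nqb_self hP, nqb_of_lt u (by omega)]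
    simp
  · obtain ⟨c, rfl⟩ : ∃ c, a = b + 1 + c := ⟨a - (b + 1), by omega⟩
    unfold nqb
    rw [if_pos (by omega), if_pos (by omega), if_pos (by omega)]
    have e1 : b + 1 + c + 1 - (b + 1) = c + 1 := by omega
    have e2 : b + 1 + c - (b + 1) = c := by omega
    have e3 : b + 1 + c - b = c + 1 := by omega
    rw [e1, e2, e3]
    rw [show b + 1 + c + 1 = (b + 1 + c) + 1 from rfl, qPoch_succ u (b + 1 + c),
      qPoch_succ u b, qPoch_succ u c]
    have hb := hP b
    have hc := hP c
    have hbc := hP (b + 1 + c)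
    have h1 : (1 - u * u ^ b) ≠ 0 := by
      intro h0; exact hP (b+1) (by rw [qPoch_succ, h0, mul_zero])
    have h2 : (1 - u * u ^ c) ≠ 0 := by
      intro h0; exact hP (c+1) (by rw [qPoch_succ, h0, mul_zero])
    have hbc' : qPoch u u (b + 1 + c) = qPoch u u (b + c) * (1 - u * u ^ (b + c)) := by
      rw [show b + 1 + c = (b + c) + 1 by omega, qPoch_succ]
    rw [hbc']
    have hqbc := hP (b + c)
    field_simp
    ring_nf

noncomputable def phiS (u : ℂ) (D : ℕ) : PowerSeries ℂ := PowerSeries.mk fun j => nqb u (D + j) j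
noncomputable def psiS (u : ℂ) (D : ℕ) : PowerSeries ℂ :=
  PowerSeries.mk fun n => if 2 ∣ n then nqb u (D + n / 2) (n / 2) else 0
noncomputable def chiS (u : ℂ) (D : ℕ) : PowerSeries ℂ :=
  PowerSeries.mk fun m => u ^ (m * (m + 1) / 2) * nqb u D m
noncomputable def omegaS (u : ℂ) (D : ℕ) : PowerSeries ℂ :=
  PowerSeries.mk fun n => nqb u (D + n / 2) (n / 2)

section
variable {u : ℂ} (hP : ∀ n, qPoch u u n ≠ 0)
include hP

lemma phi_key (D : ℕ) :
    (1 - C (u ^ (D + 1)) * X) * phiS u (D + 1) = phiS u D := by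
  have h : (1 - C (u ^ (D + 1)) * X) * phiS u (D + 1)
      = phiS u (D + 1) - C (u ^ (D + 1)) * (X * phiS u (D + 1)) := by ring
  rw [h]
  ext n
  rw [map_sub, coeff_C_mul]
  cases n with
  | zero => simp [phiS, coeff_mk, coeff_zero_X_mul, nqb_zero_right hP]
  | succ m =>
      rw [coeff_succ_X_mul]
      simp only [phiS, coeff_mk]
      have h2 : D + 1 + (m + 1) = (D + 1 + m) + 1 := by omega
      rw [h2, pascal1 hP (D + 1 + m) m, show D + 1 + m - m = D + 1 by omega,
        show D + (m + 1) = D + 1 + m by omega]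
      ring

lemma phi_base : (1 - X) * phiS u 0 = 1 := by
  have h : (1 - X) * phiS u 0 = phiS u 0 - X * phiS u 0 := by ring
  rw [h]
  ext n
  rw [map_sub]
  cases n with
  | zero => simp [phiS, coeff_mk, coeff_zero_X_mul, nqb_zero_right hP]
  | succ m =>
      rw [coeff_succ_X_mul]
      simp [phiS, coeff_mk, nqb_self hP, Nat.succ_ne_zero]

lemma phi_prod (D : ℕ) :
    (∏ i ∈ range (D + 1), (1 - C (u ^ i) * X)) * phiS u D = 1 := by
  induction D with
  | zero => simpa using phi_base hP
  | succ E ih =>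
      rw [prod_range_succ, mul_assoc, phi_key hP E, ih]

lemma psi_key (D : ℕ) :
    (1 - C (u ^ (D + 1)) * X ^ 2) * psiS u (D + 1) = psiS u D := by
  have h : (1 - C (u ^ (D + 1)) * X ^ 2) * psiS u (D + 1)
      = psiS u (D + 1) - C (u ^ (D + 1)) * (X ^ 2 * psiS u (D + 1)) := by ring
  rw [h]
  ext n
  rw [map_sub, coeff_C_mul, coeff_X_pow_mul']
  simp only [psiS, coeff_mk]
  rcases Nat.even_or_odd n with ⟨h0, rfl⟩ | ⟨h0, rfl⟩
  · cases h0 with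
    | zero => norm_num [nqb_zero_right hP]
    | succ p =>
        rw [if_pos (by omega : 2 ∣ (p+1) + (p+1)), if_pos (by omega : 2 ≤ (p+1) + (p+1)),
          if_pos (by omega : 2 ∣ (p+1) + (p+1) - 2)]
        have e1 : ((p+1) + (p+1)) / 2 = p + 1 := by omega
        have e2 : ((p+1) + (p+1) - 2) / 2 = p := by omega
        rw [e1, e2, show D + 1 + (p + 1) = (D + 1 + p) + 1 by omega,
          pascal1 hP (D + 1 + p) p, show D + 1 + p - p = D + 1 by omega,
          show D + (p + 1) = D + 1 + p by omega]
        rw [if_pos (by omega : 2 ∣ p + 1 + (p + 1))]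
        ring
  · have hd : ¬ (2 ∣ 2 * h0 + 1) := by omega
    rw [if_neg hd, if_neg hd]
    rcases Nat.lt_or_ge (2 * h0 + 1) 2 with hlt | hge
    · rw [if_neg (by omega : ¬ 2 ≤ 2 * h0 + 1)]
      ring
    · rw [if_pos (by omega : 2 ≤ 2 * h0 + 1), if_neg (by omega : ¬ 2 ∣ 2 * h0 + 1 - 2)]
      ring

lemma psi_base : (1 - X ^ 2) * psiS u 0 = 1 := by
  have h : (1 - X ^ 2) * psiS u 0 = psiS u 0 - X ^ 2 * psiS u 0 := by ring
  rw [h]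
  ext n
  rw [map_sub, coeff_X_pow_mul']
  simp only [psiS, coeff_mk, zero_add, coeff_one]
  rcases Nat.even_or_odd n with ⟨h0, rfl⟩ | ⟨h0, rfl⟩
  · cases h0 with
    | zero => norm_num [nqb_zero_right hP]
    | succ p =>
        rw [if_pos (by omega : 2 ∣ (p+1)+(p+1)), if_pos (by omega : 2 ≤ (p+1)+(p+1)),
          if_pos (by omega : 2 ∣ (p+1)+(p+1) - 2), if_neg (by omega : ¬ ((p+1)+(p+1) = 0))]
        have e1 : ((p+1) + (p+1)) / 2 = p + 1 := by omega
        have e2 : ((p+1) + (p+1) - 2) / 2 = p := by omega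
        rw [e1, e2, nqb_self hP, nqb_self hP]
        ring
  · have hd : ¬ (2 ∣ 2 * h0 + 1) := by omega
    rw [if_neg hd, if_neg (by omega : ¬ (2 * h0 + 1 = 0))]
    rcases Nat.lt_or_ge (2 * h0 + 1) 2 with hlt | hge
    · rw [if_neg (by omega : ¬ 2 ≤ 2 * h0 + 1)]; ring
    · rw [if_pos (by omega : 2 ≤ 2 * h0 + 1), if_neg (by omega : ¬ 2 ∣ 2 * h0 + 1 - 2)]; ring

lemma psi_prod (D : ℕ) :
    (∏ i ∈ range (D + 1), (1 - C (u ^ i) * X ^ 2)) * psiS u D = 1 := by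
  induction D with
  | zero => simpa using psi_base hP
  | succ E ih => rw [prod_range_succ, mul_assoc, psi_key hP E, ih]

lemma chi_prod (D : ℕ) :
    ∏ i ∈ range D, (1 + C (u ^ (i + 1)) * X) = chiS u D := by
  induction D with
  | zero =>
      rw [prod_range_zero]
      ext n
      simp only [chiS, coeff_mk, coeff_one]
      cases n with
      | zero => simp [nqb_zero_right hP]
      | succ m => simp [nqb_of_lt u (by omega : 0 < m + 1)]
  | succ E ih =>
      rw [prod_range_succ, ih]
      ext n
      have h : chiS u E * (1 + C (u ^ (E + 1)) * X)
          = chiS u E + C (u ^ (E + 1)) * (X * chiS u E) := by ring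
      rw [h, map_add, coeff_C_mul]
      cases n with
      | zero => simp [chiS, coeff_mk, coeff_zero_X_mul, nqb_zero_right hP]
      | succ m =>
          rw [coeff_succ_X_mul]
          simp only [chiS, coeff_mk]
          rcases Nat.lt_or_ge E m with hEm | hEm
          · rw [nqb_of_lt u (by omega), nqb_of_lt u (by omega), nqb_of_lt u (by omega)]
            ring
          · have e : u ^ ((m + 1) * (m + 1 + 1) / 2) * (u ^ (E - m) * nqb u E m)
                = u ^ (E + 1) * (u ^ (m * (m + 1) / 2) * nqb u E m) := by
              rw [← mul_assoc, ← mul_assoc, ← pow_add, ← pow_add]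
              congr 2
              have h1 : (m + 1) * (m + 1 + 1) = m * (m + 1) + 2 * (m + 1) := by ring
              have h2 : m * (m + 1) % 2 = 0 := Nat.even_iff.mp (Nat.even_mul_succ_self m)
              omega
            rw [pascal1 hP E m]
            linear_combination -e

lemma chiM (D : ℕ) :
    ∏ i ∈ range (D + 1), (1 + C (u ^ i) * X) = chiS u D * (1 + X) := by
  rw [prod_range_succ', chi_prod hP D]
  simp

end

lemma omega_eq (u : ℂ) (D : ℕ) : (1 + X) * psiS u D = omegaS u D := by
  have h : (1 + X) * psiS u D = psiS u D + X * psiS u D := by ring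
  rw [h]
  ext n
  rw [map_add]
  cases n with
  | zero => simp [psiS, omegaS, coeff_mk, coeff_zero_X_mul]
  | succ m =>
      rw [coeff_succ_X_mul]
      simp only [psiS, omegaS, coeff_mk]
      rcases Nat.even_or_odd m with ⟨p, rfl⟩ | ⟨p, rfl⟩
      · rw [if_neg (by omega : ¬ 2 ∣ p + p + 1), if_pos (by omega : 2 ∣ p + p),
          show (p + p) / 2 = p by omega, show (p + p + 1) / 2 = p by omega]
        ring
      · rw [if_pos (by omega : 2 ∣ 2 * p + 1 + 1), if_neg (by omega : ¬ 2 ∣ 2 * p + 1),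
          show (2 * p + 1 + 1) / 2 = p + 1 by omega]
        ring

lemma PM_R (u : ℂ) (D : ℕ) :
    (∏ i ∈ range (D + 1), (1 - C (u ^ i) * X)) * (∏ i ∈ range (D + 1), (1 + C (u ^ i) * X))
      = ∏ i ∈ range (D + 1), (1 - C ((u ^ 2) ^ i) * X ^ 2) := by
  rw [← prod_mul_distrib]
  refine prod_congr rfl fun i _ => ?_
  have key : ∀ c : PowerSeries ℂ, (1 - c * X) * (1 + c * X) = 1 - c ^ 2 * X ^ 2 := fun c => by
    ring
  have h : ((u ^ i) ^ 2) = (u ^ 2) ^ i := by rw [← pow_mul, ← pow_mul, mul_comm]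
  rw [key, ← map_pow, h]

lemma phi_eq {u : ℂ} (hP : ∀ n, qPoch u u n ≠ 0) (hP2 : ∀ n, qPoch (u ^ 2) (u ^ 2) n ≠ 0)
    (D : ℕ) : phiS u D = chiS u D * omegaS (u ^ 2) D := by
  have h1 := phi_prod hP D
  have h2 := psi_prod (u := u ^ 2) hP2 D
  have h3 := PM_R u D
  have hM := chiM hP D
  calc phiS u D
      = phiS u D * ((∏ i ∈ range (D + 1), (1 - C ((u ^ 2) ^ i) * X ^ 2)) * psiS (u ^ 2) D) := by
        rw [h2, mul_one]
    _ = ((∏ i ∈ range (D + 1), (1 - C (u ^ i) * X)) * phiS u D)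
          * ((∏ i ∈ range (D + 1), (1 + C (u ^ i) * X)) * psiS (u ^ 2) D) := by
        rw [← h3]; ring
    _ = (∏ i ∈ range (D + 1), (1 + C (u ^ i) * X)) * psiS (u ^ 2) D := by rw [h1, one_mul]
    _ = chiS u D * ((1 + X) * psiS (u ^ 2) D) := by rw [hM]; ring
    _ = chiS u D * omegaS (u ^ 2) D := by rw [omega_eq]

/-- The key finite identity. -/
lemma L3 {u : ℂ} (hP : ∀ n, qPoch u u n ≠ 0) (hP2 : ∀ n, qPoch (u ^ 2) (u ^ 2) n ≠ 0)
    (D j : ℕ) :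
    nqb u (D + j) j = ∑ p ∈ antidiagonal j,
      u ^ (p.1 * (p.1 + 1) / 2) * nqb u D p.1 * nqb (u ^ 2) (D + p.2 / 2) (p.2 / 2) := by
  have h := congrArg (coeff j) (phi_eq hP hP2 D)
  rw [coeff_mul] at h
  simp only [phiS, chiS, omegaS, coeff_mk] at h
  rw [h]

lemma hev (a : ℕ) : (a : ℤ) * ((a : ℤ) - 1) = 2 * ((a * (a - 1) / 2 : ℕ) : ℤ) := by
  rcases a with _ | b
  · simp
  · have hc : (b + 1) * ((b + 1) - 1) = b * (b + 1) := by rw [Nat.succ_sub_one, Nat.mul_comm]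
    have h2 : b * (b + 1) % 2 = 0 := by
      have := Nat.even_mul_succ_self b
      rw [Nat.even_iff] at this
      omega
    have h4 : 2 * (b * (b + 1) / 2) = b * (b + 1) := by omega
    rw [hc]
    have h6 : (2 : ℤ) * ((b * (b + 1) / 2 : ℕ) : ℤ) = ((b * (b + 1) : ℕ) : ℤ) := by
      exact_mod_cast congrArg (Nat.cast : ℕ → ℤ) h4
    rw [h6]
    push_cast
    ring

lemma hev2 (a : ℕ) : (a : ℤ) * ((a : ℤ) + 1) = 2 * ((a * (a + 1) / 2 : ℕ) : ℤ) := by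
  have h2 : a * (a + 1) % 2 = 0 := by
    have := Nat.even_mul_succ_self a
    rw [Nat.even_iff] at this
    omega
  have h4 : 2 * (a * (a + 1) / 2) = a * (a + 1) := by omega
  have h6 : (2 : ℤ) * ((a * (a + 1) / 2 : ℕ) : ℤ) = ((a * (a + 1) : ℕ) : ℤ) := by
    exact_mod_cast congrArg (Nat.cast : ℕ → ℤ) h4
  rw [h6]
  push_cast
  ring

lemma Qkl_eq (k l m n : ℕ) :
    Qkl k l m n = ((l * (m + n) + k * ((m + n) * ((m + n) - 1) / 2) : ℕ) : ℤ)
      + ((m * (m + 1) / 2 : ℕ) : ℤ) := by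
  unfold Qkl
  have t1 : (k : ℤ) * ((n : ℤ) * ((n : ℤ) - 1)) / 2 = k * ((n * (n - 1) / 2 : ℕ) : ℤ) := by
    rw [hev n, show (k : ℤ) * (2 * ((n * (n - 1) / 2 : ℕ) : ℤ)) =
      2 * (k * ((n * (n - 1) / 2 : ℕ) : ℤ)) by ring]
    exact Int.mul_ediv_cancel_left _ two_ne_zero
  have t2 : ((k : ℤ) + 1) * ((m : ℤ) * ((m : ℤ) + 1)) / 2
      = ((k : ℤ) + 1) * ((m * (m + 1) / 2 : ℕ) : ℤ) := by
    rw [hev2 m, show ((k : ℤ) + 1) * (2 * ((m * (m + 1) / 2 : ℕ) : ℤ)) =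
      2 * (((k : ℤ) + 1) * ((m * (m + 1) / 2 : ℕ) : ℤ)) by ring]
    exact Int.mul_ediv_cancel_left _ two_ne_zero
  rw [t1, t2]
  have g1 : ((m : ℤ) + n) * (((m : ℤ) + n) - 1)
      = 2 * (((m + n) * ((m + n) - 1) / 2 : ℕ) : ℤ) := by
    have h := hev (m + n)
    rwa [Nat.cast_add] at h
  have g2 := hev n
  have g3 := hev2 m
  have key : 2 * (((m + n) * ((m + n) - 1) / 2 : ℕ) : ℤ)
      = 2 * ((n * (n - 1) / 2 : ℕ) : ℤ) + 2 * ((m * (m + 1) / 2 : ℕ) : ℤ)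
        + 2 * ((n : ℤ) - 1) * m := by linear_combination g2 + g3 - g1
  have he : (((m + n) * ((m + n) - 1) / 2 : ℕ) : ℤ)
      = ((n * (n - 1) / 2 : ℕ) : ℤ) + ((m * (m + 1) / 2 : ℕ) : ℤ) + ((n : ℤ) - 1) * m := by
    linarith
  simp only [Nat.cast_add, Nat.cast_mul]
  linear_combination (-(k : ℤ)) * he

lemma nqb_shift {u : ℂ} (hu : ‖u‖ < 1) (Cc h : ℕ) :
    nqb u (Cc + h) h = (∏ i ∈ range Cc, (1 - u * u ^ (h + i))) / qPoch u u Cc := by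
  unfold nqb
  rw [if_pos (Nat.le_add_left h Cc), Nat.add_sub_cancel]
  have hps : qPoch u u (Cc + h) = qPoch u u h * ∏ i ∈ range Cc, (1 - u * u ^ (h + i)) := by
    rw [show Cc + h = h + Cc by omega]
    unfold qPoch
    rw [Finset.prod_range_add]
  rw [hps, mul_comm (qPoch u u h) (qPoch u u Cc), mul_comm (qPoch u u Cc) (qPoch u u h)]
  exact mul_div_mul_left _ _ (qPoch_ne_zero hu h)

lemma norm_factor_le {u : ℂ} (hu : ‖u‖ < 1) (i : ℕ) : ‖1 - u * u ^ i‖ ≤ 2 := by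
  calc ‖1 - u * u ^ i‖ ≤ ‖(1:ℂ)‖ + ‖u * u ^ i‖ := norm_sub_le _ _
    _ ≤ 1 + 1 := by
        rw [norm_one, norm_mul, norm_pow]
        have h1 : ‖u‖ * ‖u‖ ^ i ≤ 1 := by
          have := pow_le_one₀ (norm_nonneg u) hu.le (n := i)
          nlinarith [norm_nonneg u]
        linarith
    _ = 2 := by norm_num

lemma nqb_norm_le {u : ℂ} (hu : ‖u‖ < 1) (Cc h : ℕ) :
    ‖nqb u (Cc + h) h‖ ≤ 2 ^ Cc / ‖qPoch u u Cc‖ := by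
  rw [nqb_shift hu Cc h, norm_div]
  have hc : (0:ℝ) < ‖qPoch u u Cc‖ := norm_pos_iff.2 (qPoch_ne_zero hu Cc)
  gcongr
  calc ‖∏ i ∈ range Cc, (1 - u * u ^ (h + i))‖ = ∏ i ∈ range Cc, ‖1 - u * u ^ (h + i)‖ :=
        norm_prod _ _
    _ ≤ ∏ _i ∈ range Cc, (2:ℝ) :=
        Finset.prod_le_prod (fun i _ => norm_nonneg _) (fun i _ => norm_factor_le hu _)
    _ = 2 ^ Cc := by rw [Finset.prod_const, card_range]

lemma nqb_norm_ge {u : ℂ} (hu : ‖u‖ < 1) (Cc h : ℕ) :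
    (1 - ‖u‖ ^ (h + 1)) ^ Cc / ‖qPoch u u Cc‖ ≤ ‖nqb u (Cc + h) h‖ := by
  rw [nqb_shift hu Cc h, norm_div]
  have hc : (0:ℝ) < ‖qPoch u u Cc‖ := norm_pos_iff.2 (qPoch_ne_zero hu Cc)
  gcongr
  have hu1 : ‖u‖ ^ (h + 1) ≤ 1 := pow_le_one₀ (norm_nonneg u) hu.le
  calc (1 - ‖u‖ ^ (h + 1)) ^ Cc = ∏ _i ∈ range Cc, (1 - ‖u‖ ^ (h + 1)) := by
        rw [Finset.prod_const, card_range]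
    _ ≤ ∏ i ∈ range Cc, ‖1 - u * u ^ (h + i)‖ := by
        apply Finset.prod_le_prod (fun i _ => by linarith) (fun i _ => ?_)
        have h1 : ‖u * u ^ (h + i)‖ ≤ ‖u‖ ^ (h + 1) := by
          rw [norm_mul, norm_pow, ← pow_succ']
          exact pow_le_pow_of_le_one (norm_nonneg u) hu.le (by omega)
        have h2 := norm_sub_norm_le (1:ℂ) (u * u ^ (h + i))
        rw [norm_one] at h2
        linarith
    _ = ‖∏ i ∈ range Cc, (1 - u * u ^ (h + i))‖ := (norm_prod _ _).symm

/-- The double-sum term. -/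
noncomputable def fF (N k l : ℕ) (q x : ℂ) (p : ℕ × ℕ) : ℂ :=
  x ^ (p.1 + p.2) * q ^ (Qkl k l p.1 p.2)
    * qbinom q ((N : ℤ) - ((l : ℤ) + ((p.2 : ℤ) - 1) * k + p.1 * ((k : ℤ) + 1)) + p.1) p.1
    * qbinom (q ^ 2)
        ((N : ℤ) - ((l : ℤ) + ((p.2 : ℤ) - 1) * k) - k * p.1 + (p.2 / 2 : ℕ))
        ((p.2 / 2 : ℕ) : ℤ)

/-- The single-sum term. -/
noncomputable def gG (N k l : ℕ) (q x : ℂ) (j : ℕ) : ℂ :=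
  x ^ j * q ^ (l * j + k * (j * (j - 1) / 2))
    * qbinom q ((N : ℤ) - l - ((j : ℤ) - 1) * k + j) j

lemma diag (N k l : ℕ) (q x : ℂ) (hq0 : q ≠ 0) (hq : ‖q‖ < 1) (j : ℕ) :
    ∑ p ∈ antidiagonal j, fF N k l q x p = gG N k l q x j := by
  have hP := qPoch_ne_zero hq
  have hq2 : ‖q ^ 2‖ < 1 := by rw [norm_pow]; nlinarith [norm_nonneg q]
  have hP2 := qPoch_ne_zero hq2
  by_cases ht : 0 ≤ (N : ℤ) - l - ((j : ℤ) - 1) * k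
  · obtain ⟨D, hD⟩ : ∃ D : ℕ, (D : ℤ) = (N : ℤ) - l - ((j : ℤ) - 1) * k :=
      ⟨((N : ℤ) - l - ((j : ℤ) - 1) * k).toNat, Int.toNat_of_nonneg ht⟩
    have hgj : gG N k l q x j
        = x ^ j * q ^ (l * j + k * (j * (j - 1) / 2)) * nqb q (D + j) j := by
      unfold gG
      have harg : (N : ℤ) - l - ((j : ℤ) - 1) * k + j = ((D + j : ℕ) : ℤ) := by
        push_cast
        rw [hD]
      rw [harg, qbinom_natCast]
    rw [hgj]
    have hterm : ∀ p ∈ antidiagonal j, fF N k l q x p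
        = (x ^ j * q ^ (l * j + k * (j * (j - 1) / 2)))
            * (q ^ (p.1 * (p.1 + 1) / 2) * nqb q D p.1
                * nqb (q ^ 2) (D + p.2 / 2) (p.2 / 2)) := by
      rintro ⟨m, n⟩ hp
      rw [Finset.HasAntidiagonal.mem_antidiagonal] at hp
      simp only at hp
      unfold fF
      simp only
      have hpz : (m : ℤ) + n = j := by exact_mod_cast hp
      have h1 : (N : ℤ) - ((l : ℤ) + ((n : ℤ) - 1) * k + m * ((k : ℤ) + 1)) + m
          = ((D : ℕ) : ℤ) := by
        rw [hD]; linear_combination (-(k : ℤ)) * hpz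
      have h2 : (N : ℤ) - ((l : ℤ) + ((n : ℤ) - 1) * k) - k * m + ((n / 2 : ℕ) : ℤ)
          = ((D + n / 2 : ℕ) : ℤ) := by
        push_cast
        rw [hD]; linear_combination (-(k : ℤ)) * hpz
      rw [h1, h2, qbinom_natCast, qbinom_natCast]
      rw [Qkl_eq k l m n, zpow_add₀ hq0, zpow_natCast, zpow_natCast, hp]
      ring
    rw [sum_congr rfl hterm, ← mul_sum, ← L3 hP hP2 D j]
  · push_neg at ht
    have hgj : gG N k l q x j = 0 := by
      unfold gG
      rw [qbinom_neg q _ _ (by linarith : (N : ℤ) - l - ((j : ℤ) - 1) * k + j < (j : ℤ))]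
      ring
    rw [hgj]
    apply sum_eq_zero
    rintro ⟨m, n⟩ hp
    rw [Finset.HasAntidiagonal.mem_antidiagonal] at hp
    simp only at hp
    unfold fF
    simp only
    have hpz : (m : ℤ) + n = j := by exact_mod_cast hp
    have h1 : qbinom q ((N : ℤ) - ((l : ℤ) + ((n : ℤ) - 1) * k + m * ((k : ℤ) + 1)) + m)
        (m : ℤ) = 0 := by
      apply qbinom_neg
      have harg : (N : ℤ) - ((l : ℤ) + ((n : ℤ) - 1) * k + m * ((k : ℤ) + 1)) + m
          = (N : ℤ) - l - ((j : ℤ) - 1) * k := by linear_combination (-(k : ℤ)) * hpz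
      rw [harg]
      have hm0 : (0 : ℤ) ≤ m := Int.ofNat_nonneg m
      linarith
    rw [h1, mul_zero, zero_mul]

lemma grouped (f : ℕ × ℕ → ℂ) (hfs : Summable f) :
    ∑' p : ℕ × ℕ, f p = ∑' j : ℕ, ∑ p ∈ antidiagonal j, f p := by
  rw [← Finset.HasAntidiagonal.sigmaAntidiagonalEquivProd.tsum_eq f]
  have hsum : Summable fun c : Σ n : ℕ, {x // x ∈ antidiagonal n} =>
      f (Finset.HasAntidiagonal.sigmaAntidiagonalEquivProd c) :=
    Finset.HasAntidiagonal.sigmaAntidiagonalEquivProd.summable_iff.2 hfs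
  refine (Summable.tsum_sigma hsum).trans (tsum_congr fun j => ?_)
  exact Finset.tsum_subtype _ _

lemma sum1 (N k l : ℕ) (q x : ℂ) (hk : k ≠ 0) : Summable (fF N k l q x) := by
  apply summable_of_ne_finset_zero (s := range (N + 2) ×ˢ range (N + 2))
  rintro ⟨m, n⟩ hp
  simp only [mem_product, mem_range, not_and_or, not_lt] at hp
  have hnat : N + 2 ≤ m + n := by omega
  unfold fF
  simp only
  have h1 : qbinom q ((N : ℤ) - ((l : ℤ) + ((n : ℤ) - 1) * k + m * ((k : ℤ) + 1)) + m)
      (m : ℤ) = 0 := by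
    apply qbinom_neg
    have hk1 : (1 : ℤ) ≤ (k : ℤ) := by exact_mod_cast Nat.one_le_iff_ne_zero.2 hk
    have hmn : ((N : ℤ) + 1) ≤ (m : ℤ) + n - 1 := by
      have : ((N : ℤ) + 2) ≤ (m : ℤ) + n := by exact_mod_cast hnat
      linarith
    have h3 : ((N : ℤ) + 1) * 1 ≤ ((m : ℤ) + n - 1) * k :=
      mul_le_mul hmn hk1 (by norm_num) (by linarith)
    have hl0 : (0 : ℤ) ≤ l := Int.ofNat_nonneg l
    linarith
  rw [h1, mul_zero, zero_mul]

lemma sum3 (N l : ℕ) (q x : ℂ) (hN : l ≤ N) (hq0 : q ≠ 0) (hq : ‖q‖ < 1)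
    (hr : ‖x‖ * ‖q‖ ^ l < 1) : Summable (fF N 0 l q x) := by
  have hq2 : ‖q ^ 2‖ < 1 := by rw [norm_pow]; nlinarith [norm_nonneg q]
  set r := ‖x‖ * ‖q‖ ^ l with hrdef
  have hr0 : (0 : ℝ) ≤ r := by positivity
  set Cc := N - l with hCcdef
  have hCcZ : ((Cc : ℕ) : ℤ) = (N : ℤ) - l := by omega
  set M := (2 : ℝ) ^ Cc / ‖qPoch (q ^ 2) (q ^ 2) Cc‖ with hM
  apply Summable.of_norm_bounded
    (g := fun p : ℕ × ℕ => (‖q‖ ^ (p.1 * (p.1 + 1) / 2) * ‖nqb q Cc p.1‖ * r ^ p.1)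
      * (M * r ^ p.2))
  · apply Summable.mul_of_nonneg
      (f := fun m : ℕ => ‖q‖ ^ (m * (m + 1) / 2) * ‖nqb q Cc m‖ * r ^ m)
      (g := fun n : ℕ => M * r ^ n)
    · apply summable_of_ne_finset_zero (s := range (Cc + 1))
      intro m hm
      rw [mem_range, not_lt] at hm
      rw [nqb_of_lt q (by omega)]
      simp
    · exact ((summable_geometric_of_lt_one hr0 hr).mul_left M)
    · intro m; positivity
    · intro n; positivity
  · rintro ⟨m, n⟩
    unfold fF
    simp only
    have h1 : (N : ℤ) - ((l : ℤ) + ((n : ℤ) - 1) * (0 : ℕ) + m * (((0 : ℕ) : ℤ) + 1)) + m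
        = ((Cc : ℕ) : ℤ) := by
      rw [hCcZ]; push_cast; ring
    have h2 : (N : ℤ) - ((l : ℤ) + ((n : ℤ) - 1) * (0 : ℕ)) - (0 : ℕ) * m + ((n / 2 : ℕ) : ℤ)
        = ((Cc + n / 2 : ℕ) : ℤ) := by
      push_cast
      rw [hCcZ]
      push_cast
      ring
    rw [h1, h2, qbinom_natCast, qbinom_natCast]
    rw [Qkl_eq 0 l m n,
      show l * (m + n) + 0 * ((m + n) * ((m + n) - 1) / 2) = l * m + l * n by ring,
      zpow_add₀ hq0, zpow_natCast, zpow_natCast]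
    simp only [norm_mul, norm_pow]
    have hb2 : ‖nqb (q ^ 2) (Cc + n / 2) (n / 2)‖ ≤ M := nqb_norm_le hq2 Cc (n / 2)
    have hexp : ‖x‖ ^ (m + n) * (‖q‖ ^ (l * m + l * n) * ‖q‖ ^ (m * (m + 1) / 2))
        = ‖q‖ ^ (m * (m + 1) / 2) * r ^ m * r ^ n := by
      rw [hrdef, pow_add, pow_add, mul_pow, mul_pow, ← pow_mul, ← pow_mul]
      ring
    calc ‖x‖ ^ (m + n) * (‖q‖ ^ (l * m + l * n) * ‖q‖ ^ (m * (m + 1) / 2))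
          * ‖nqb q Cc m‖ * ‖nqb (q ^ 2) (Cc + n / 2) (n / 2)‖
        = (‖q‖ ^ (m * (m + 1) / 2) * ‖nqb q Cc m‖ * r ^ m)
            * (r ^ n * ‖nqb (q ^ 2) (Cc + n / 2) (n / 2)‖) := by rw [hexp]; ring
      _ ≤ (‖q‖ ^ (m * (m + 1) / 2) * ‖nqb q Cc m‖ * r ^ m) * (M * r ^ n) := by
          apply mul_le_mul_of_nonneg_left _ (by positivity)
          rw [mul_comm M]
          exact mul_le_mul_of_nonneg_left hb2 (by positivity)

lemma gnot (N l : ℕ) (q x : ℂ) (hN : l ≤ N) (hq : ‖q‖ < 1)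
    (hr : 1 ≤ ‖x‖ * ‖q‖ ^ l) : ¬ Summable (gG N 0 l q x) := by
  intro hs
  set r := ‖x‖ * ‖q‖ ^ l with hrdef
  set Cc := N - l with hCcdef
  have hgj : ∀ j : ℕ, gG N 0 l q x j = x ^ j * q ^ (l * j) * nqb q (Cc + j) j := by
    intro j
    unfold gG
    rw [show l * j + 0 * (j * (j - 1) / 2) = l * j by ring]
    have harg : (N : ℤ) - l - ((j : ℤ) - 1) * ((0 : ℕ) : ℤ) + j = ((Cc + j : ℕ) : ℤ) := by
      push_cast
      omega
    rw [harg, qbinom_natCast]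
  have hq1 : (0 : ℝ) < ‖qPoch q q Cc‖ := norm_pos_iff.2 (qPoch_ne_zero hq Cc)
  set ε := ((1 : ℝ) / 2) ^ Cc / ‖qPoch q q Cc‖ with hε
  have hε0 : 0 < ε := by positivity
  have htend : Filter.Tendsto (fun j => ‖gG N 0 l q x j‖) Filter.atTop (nhds 0) := by
    have h := hs.tendsto_atTop_zero.norm
    rwa [norm_zero] at h
  obtain ⟨J0, hJ0⟩ : ∃ J0 : ℕ, ‖q‖ ^ J0 < 1 / 2 :=
    exists_pow_lt_of_lt_one (by norm_num) hq
  have hev : ∀ᶠ j in Filter.atTop, ‖gG N 0 l q x j‖ < ε :=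
    htend.eventually_lt_const hε0
  obtain ⟨j, hjlt, hjJ⟩ := (hev.and (Filter.eventually_ge_atTop J0)).exists
  have hlow : ε ≤ ‖gG N 0 l q x j‖ := by
    rw [hgj j, norm_mul, norm_mul, norm_pow, norm_pow]
    have h5 : (1 : ℝ) ≤ ‖x‖ ^ j * ‖q‖ ^ (l * j) := by
      have hrj : r ^ j = ‖x‖ ^ j * ‖q‖ ^ (l * j) := by
        rw [hrdef, mul_pow, ← pow_mul]
      rw [← hrj]
      exact one_le_pow₀ hr
    have h6 := nqb_norm_ge hq Cc j
    have h7 : (1 / 2 : ℝ) ≤ 1 - ‖q‖ ^ (j + 1) := by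
      have h8 : ‖q‖ ^ (j + 1) ≤ ‖q‖ ^ J0 :=
        pow_le_pow_of_le_one (norm_nonneg q) hq.le (by omega)
      linarith
    calc ε = (1 / 2 : ℝ) ^ Cc / ‖qPoch q q Cc‖ := rfl
      _ ≤ (1 - ‖q‖ ^ (j + 1)) ^ Cc / ‖qPoch q q Cc‖ := by
          gcongr
      _ ≤ ‖nqb q (Cc + j) j‖ := h6
      _ ≤ ‖x‖ ^ j * ‖q‖ ^ (l * j) * ‖nqb q (Cc + j) j‖ :=
          le_mul_of_one_le_left (norm_nonneg _) h5
  linarith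

theorem main (N k l : ℕ) (hl : 0 < l) (hN : l ≤ N) (q x : ℂ) (hq0 : q ≠ 0)
    (hq : ‖q‖ < 1) :
    ∑' j : ℕ, gG N k l q x j = ∑' p : ℕ × ℕ, fF N k l q x p := by
  by_cases hfs : Summable (fF N k l q x)
  · rw [grouped (fF N k l q x) hfs]
    exact tsum_congr fun j => (diag N k l q x hq0 hq j).symm
  · have hk : k = 0 := by
      by_contra hk0
      exact hfs (sum1 N k l q x hk0)
    subst hk
    have hr : 1 ≤ ‖x‖ * ‖q‖ ^ l := by
      by_contra hr0
      push_neg at hr0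
      exact hfs (sum3 N l q x hN hq0 hq hr0)
    rw [tsum_eq_zero_of_not_summable (gnot N l q x hN hq hr),
      tsum_eq_zero_of_not_summable hfs]

end Stmt2Aux

/-- polynomial analogue (bounded largest part `N`) of the
single-sum = double-sum identity for uniform gap conditions. -/
theorem stmt2 (N k l : ℕ) (hl : 0 < l) (hN : l ≤ N) (q x : ℂ) (hq0 : q ≠ 0)
    (hq : ‖q‖ < 1) :
    ∑' j : ℕ, x ^ j * q ^ (l * j + k * (j * (j - 1) / 2))
        * qbinom q ((N : ℤ) - l - ((j : ℤ) - 1) * k + j) j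
      = ∑' p : ℕ × ℕ, x ^ (p.1 + p.2) * q ^ (Qkl k l p.1 p.2)
          * qbinom q ((N : ℤ) - ((l : ℤ) + ((p.2 : ℤ) - 1) * k + p.1 * ((k : ℤ) + 1)) + p.1) p.1
          * qbinom (q ^ 2)
              ((N : ℤ) - ((l : ℤ) + ((p.2 : ℤ) - 1) * k) - k * p.1 + (p.2 / 2 : ℕ))
              ((p.2 / 2 : ℕ) : ℤ) := by
  exact Stmt2Aux.main N k l hl hN q x hq0 hq
end

section
/- ∑_{m,n≥0} q^{(3m²+m)/2 + 2mn + n²} / ((q;q)_m (q^4;q^4)_{⌊n/2⌋}) = ∑_{m,n≥0} q^{2m² + 2mn + n²} / ((q^2;q^2)_m (q^2;q^2)_n) as formal power series (or for |q| < 1). -/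
open Finset

namespace Stmt6Aux

lemma qPoch_succ (a x : ℂ) (n : ℕ) :
    qPoch a x (n + 1) = qPoch a x n * (1 - a * x ^ n) := Finset.prod_range_succ _ _

lemma qPoch_zero (a x : ℂ) : qPoch a x 0 = 1 := rfl

variable {q : ℂ}

lemma one_sub_pow_ne (hq : ‖q‖ < 1) {s : ℕ} (hs : 1 ≤ s) : (1 : ℂ) - q ^ s ≠ 0 := by
  intro h
  have h1 : q ^ s = 1 := by linear_combination -h
  have h2 : ‖q ^ s‖ < 1 := by
    rw [norm_pow]
    calc ‖q‖ ^ s ≤ ‖q‖ ^ 1 := pow_le_pow_of_le_one (norm_nonneg q) hq.le hs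
    _ < 1 := by simpa using hq
  rw [h1] at h2; simp at h2

lemma qPoch_pow_ne (hq : ‖q‖ < 1) (s : ℕ) (hs : 1 ≤ s) (n : ℕ) :
    qPoch (q ^ s) (q ^ s) n ≠ 0 := by
  induction n with
  | zero => simp [qPoch]
  | succ n ih =>
    rw [qPoch_succ]
    refine mul_ne_zero ih ?_
    have : (q ^ s) * (q ^ s) ^ n = q ^ (s * (n + 1)) := by ring
    rw [this]
    exact one_sub_pow_ne hq (by nlinarith)

lemma qPoch_q_ne (hq : ‖q‖ < 1) (n : ℕ) : qPoch q q n ≠ 0 := by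
  have := qPoch_pow_ne hq 1 le_rfl n
  simpa using this

noncomputable def aa (q : ℂ) (m : ℕ) : ℂ := q ^ (m * (m + 1) / 2) / qPoch q q m
noncomputable def bb (q : ℂ) (k : ℕ) : ℂ := 1 / qPoch (q ^ 4) (q ^ 4) k
noncomputable def al (q : ℂ) (i : ℕ) : ℂ := q ^ (i ^ 2) / qPoch (q ^ 2) (q ^ 2) i
noncomputable def be (q : ℂ) (j : ℕ) : ℂ := 1 / qPoch (q ^ 2) (q ^ 2) j

lemma tri_succ (m : ℕ) : (m + 1) * (m + 2) / 2 = m * (m + 1) / 2 + (m + 1) := by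
  obtain ⟨t, ht⟩ := Nat.even_mul_succ_self m
  have h2 : m * (m + 1) = 2 * t := by omega
  have h3 : (m + 1) * (m + 2) = m * (m + 1) + 2 * (m + 1) := by ring
  omega

lemma recA (hq : ‖q‖ < 1) (m : ℕ) :
    aa q (m + 1) * (1 - q ^ (m + 1)) = q ^ (m + 1) * aa q m := by
  have hP := qPoch_q_ne hq m
  have hP' := qPoch_q_ne hq (m + 1)
  rw [aa, aa, qPoch_succ]
  have he : (m + 1) * ((m + 1) + 1) / 2 = m * (m + 1) / 2 + (m + 1) := tri_succ m
  rw [he, pow_add]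
  have h1 : (1 : ℂ) - q * q ^ m = 1 - q ^ (m + 1) := by ring
  rw [h1]
  have h2 : (1:ℂ) - q ^ (m+1) ≠ 0 := one_sub_pow_ne hq (by omega)
  field_simp

lemma recB (hq : ‖q‖ < 1) (k : ℕ) :
    bb q (k + 1) * (1 - q ^ (4 * k + 4)) = bb q k := by
  have hP := qPoch_pow_ne hq 4 (by norm_num) k
  have hP' := qPoch_pow_ne hq 4 (by norm_num) (k + 1)
  rw [bb, bb, qPoch_succ]
  have h1 : q ^ 4 * (q ^ 4) ^ k = q ^ (4 * k + 4) := by ring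
  rw [h1]
  have h2 : (1:ℂ) - q ^ (4*k+4) ≠ 0 := one_sub_pow_ne hq (by omega)
  field_simp

lemma recAl (hq : ‖q‖ < 1) (i : ℕ) :
    al q (i + 1) * (1 - q ^ (2 * i + 2)) = q ^ (2 * i + 1) * al q i := by
  have hP := qPoch_pow_ne hq 2 (by norm_num) i
  have hP' := qPoch_pow_ne hq 2 (by norm_num) (i + 1)
  rw [al, al, qPoch_succ]
  have he : (i + 1) ^ 2 = i ^ 2 + (2 * i + 1) := by ring
  rw [he, pow_add]
  have h1 : (1 : ℂ) - q ^ 2 * (q ^ 2) ^ i = 1 - q ^ (2 * i + 2) := by ring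
  rw [h1]
  have h2 : (1:ℂ) - q ^ (2*i+2) ≠ 0 := one_sub_pow_ne hq (by omega)
  field_simp

lemma recBe (hq : ‖q‖ < 1) (j : ℕ) :
    be q (j + 1) * (1 - q ^ (2 * j + 2)) = be q j := by
  have hP := qPoch_pow_ne hq 2 (by norm_num) j
  have hP' := qPoch_pow_ne hq 2 (by norm_num) (j + 1)
  rw [be, be, qPoch_succ]
  have h1 : q ^ 2 * (q ^ 2) ^ j = q ^ (2 * j + 2) := by ring
  rw [h1]
  have h2 : (1:ℂ) - q ^ (2*j+2) ≠ 0 := one_sub_pow_ne hq (by omega)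
  field_simp

lemma aa_zero : aa q 0 = 1 := by simp [aa, qPoch]
lemma bb_zero : bb q 0 = 1 := by simp [bb, qPoch]
lemma al_zero : al q 0 = 1 := by simp [al, qPoch]
lemma be_zero : be q 0 = 1 := by simp [be, qPoch]

noncomputable def cc (q : ℂ) (N : ℕ) : ℂ :=
  ∑ k ∈ range (N + 1), if 2 * k ≤ N then aa q (N - 2 * k) * bb q k else 0
noncomputable def uu (q : ℂ) (N : ℕ) : ℂ :=
  ∑ k ∈ range (N + 1), if 2 * k ≤ N then q ^ (2 * k) * (aa q (N - 2 * k) * bb q k) else 0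
noncomputable def SS (q : ℂ) (N : ℕ) : ℂ := ∑ i ∈ range (N + 1), al q i * be q (N - i)
noncomputable def vv (q : ℂ) (N : ℕ) : ℂ :=
  ∑ i ∈ range (N + 1), q ^ (2 * i) * (al q i * be q (N - i))

lemma cc_eq (N R : ℕ) (h : N + 1 ≤ R) :
    cc q N = ∑ k ∈ range R, if 2 * k ≤ N then aa q (N - 2 * k) * bb q k else 0 := by
  rw [cc]
  refine Finset.sum_subset (by exact Finset.range_subset_range.mpr h) ?_
  intro x _ hx
  rw [Finset.mem_range] at hx
  rw [if_neg (by omega)]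

lemma uu_eq (N R : ℕ) (h : N + 1 ≤ R) :
    uu q N = ∑ k ∈ range R, if 2 * k ≤ N then q ^ (2 * k) * (aa q (N - 2 * k) * bb q k) else 0 := by
  rw [uu]
  refine Finset.sum_subset (by exact Finset.range_subset_range.mpr h) ?_
  intro x _ hx
  rw [Finset.mem_range] at hx
  rw [if_neg (by omega)]

lemma diamond (hq : ‖q‖ < 1) (M : ℕ) :
    uu q (M + 1) = q ^ (M + 1) * (cc q (M + 1) + cc q M) := by
  rw [uu, cc_eq (q := q) (M + 1) (M + 2) le_rfl, cc_eq (q := q) M (M + 2) (by omega),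
    ← Finset.sum_add_distrib, Finset.mul_sum]
  refine Finset.sum_congr rfl ?_
  intro k _
  rcases le_or_gt (2 * k) M with h1 | h1
  · rw [if_pos (by omega), if_pos (by omega), if_pos h1]
    rw [show M + 1 - 2 * k = (M - 2 * k) + 1 from by omega]
    have hpow : q ^ (M + 1) = q ^ (2 * k) * q ^ ((M - 2 * k) + 1) := by
      rw [← pow_add]; congr 1; omega
    rw [hpow]
    linear_combination (q ^ (2 * k) * bb q k) * recA hq (M - 2 * k)
  · rcases eq_or_lt_of_le (show M + 1 ≤ 2 * k from by omega) with h2 | h2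
    · rw [if_pos (by omega), if_pos (by omega), if_neg (by omega)]
      rw [show M + 1 - 2 * k = 0 from by omega, aa_zero, show 2 * k = M + 1 from by omega]
      ring
    · rw [if_neg (by omega), if_neg (by omega), if_neg (by omega)]
      ring

lemma star' (hq : ‖q‖ < 1) (N : ℕ) :
    cc q (N + 2) * (1 - q ^ (2 * N + 4)) =
      cc q N + (q ^ (N + 2) * uu q (N + 1) + q ^ (2 * N + 4) * cc q (N + 1)) := by
  have key : cc q (N + 2) * (1 - q ^ (2 * N + 4)) =
      (∑ k ∈ range (N + 3),
        if 2 * k ≤ N + 2 then aa q (N + 2 - 2 * k) * (bb q k * (1 - q ^ (4 * k))) else 0)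
      + (∑ k ∈ range (N + 3),
        if 2 * k ≤ N + 1 then
          (q ^ (N + 2) * q ^ (2 * k)) * (aa q (N + 1 - 2 * k) * bb q k)
            + q ^ (2 * N + 4) * (aa q (N + 1 - 2 * k) * bb q k)
        else 0) := by
    rw [cc, Finset.sum_mul, ← Finset.sum_add_distrib]
    refine Finset.sum_congr rfl ?_
    intro k _
    rcases le_or_gt (2 * k) (N + 1) with h1 | h1
    · rw [if_pos (by omega), if_pos (by omega), if_pos h1]
      obtain ⟨m', hm'⟩ : ∃ m', N + 1 = m' + 2 * k := ⟨N + 1 - 2 * k, by omega⟩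
      rw [show N + 2 - 2 * k = m' + 1 from by omega, show N + 1 - 2 * k = m' from by omega]
      have e1 : q ^ (2 * N + 4) = q ^ (4 * k) * (q ^ (m' + 1) * q ^ (m' + 1)) := by
        rw [← pow_add, ← pow_add]; congr 1; omega
      have e2 : q ^ (N + 2) * q ^ (2 * k) = q ^ (4 * k) * q ^ (m' + 1) := by
        rw [← pow_add, ← pow_add]; congr 1; omega
      rw [e1, e2]
      linear_combination (q ^ (4 * k) * bb q k * (1 + q ^ (m' + 1))) * recA hq m'
    · rcases eq_or_lt_of_le (show N + 2 ≤ 2 * k from by omega) with h2 | h2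
      · rw [if_pos (by omega), if_pos (by omega), if_neg (by omega)]
        rw [show 4 * k = 2 * N + 4 from by omega]
        ring
      · rw [if_neg (by omega), if_neg (by omega), if_neg (by omega)]
        ring
  rw [key]
  congr 1
  · -- first sum = cc q N
    rw [Finset.sum_range_succ']
    have h0 : (if 2 * 0 ≤ N + 2 then aa q (N + 2 - 2 * 0) * (bb q 0 * (1 - q ^ (4 * 0))) else 0)
        = 0 := by
      rw [if_pos (by omega)]; simp
    rw [h0, add_zero, cc_eq (q := q) N (N + 2) (by omega)]
    refine Finset.sum_congr rfl ?_
    intro j _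
    rcases le_or_gt (2 * j) N with h1 | h1
    · rw [if_pos (by omega), if_pos h1]
      rw [show N + 2 - 2 * (j + 1) = N - 2 * j from by omega,
        show 4 * (j + 1) = 4 * j + 4 from by omega]
      rw [mul_comm (aa q (N - 2 * j)) (bb q (j + 1) * (1 - q ^ (4 * j + 4))), recB hq j]
      ring
    · rw [if_neg (by omega), if_neg (by omega)]
  · -- second sum = q^(N+2) * uu (N+1) + q^(2N+4) * cc (N+1)
    rw [uu_eq (q := q) (N + 1) (N + 3) (by omega), cc_eq (q := q) (N + 1) (N + 3) (by omega),
      Finset.mul_sum, Finset.mul_sum, ← Finset.sum_add_distrib]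
    refine Finset.sum_congr rfl ?_
    intro k _
    rcases le_or_gt (2 * k) (N + 1) with h1 | h1
    · rw [if_pos h1, if_pos h1, if_pos h1]; ring
    · rw [if_neg (by omega), if_neg (by omega), if_neg (by omega)]; ring

lemma star (hq : ‖q‖ < 1) (N : ℕ) :
    cc q (N + 2) * (1 - q ^ (2 * N + 4)) =
      (q ^ (2 * N + 3) + q ^ (2 * N + 4)) * cc q (N + 1) + (1 + q ^ (2 * N + 3)) * cc q N := by
  rw [star' hq N, diamond hq N]
  
  have e : q ^ (N + 2) * q ^ (N + 1) = q ^ (2 * N + 3) := by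
    rw [← pow_add]; congr 1; omega
  linear_combination (cc q (N + 1) + cc q N) * e

noncomputable def ff (q : ℂ) : ℕ → ℂ
  | 0 => cc q 0
  | (N + 1) => cc q (N + 1) + cc q N

lemma cc_zero : cc q 0 = 1 := by
  simp [cc, aa_zero, bb_zero]

lemma cc_one (hq : ‖q‖ < 1) : cc q 1 = q / (1 - q) := by
  have h1 : qPoch q q 1 = 1 - q := by simp [qPoch]
  simp [cc, Finset.sum_range_succ, aa, bb, qPoch]

lemma TT (hq : ‖q‖ < 1) (N : ℕ) :
    ff q (N + 1) * (1 - q ^ (2 * N + 2)) = ff q N * (1 + q ^ (2 * N + 1)) := by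
  cases N with
  | zero =>
    show (cc q 1 + cc q 0) * (1 - q ^ 2) = cc q 0 * (1 + q ^ 1)
    rw [cc_zero, cc_one hq]
    have h1 : (1 : ℂ) - q ≠ 0 := by
      have := one_sub_pow_ne hq (s := 1) le_rfl; simpa using this
    field_simp
    ring
  | succ N =>
    show (cc q (N + 2) + cc q (N + 1)) * (1 - q ^ (2 * (N + 1) + 2))
      = (cc q (N + 1) + cc q N) * (1 + q ^ (2 * (N + 1) + 1))
    have h := star hq N
    have e1 : 2 * (N + 1) + 2 = 2 * N + 4 := by omega
    have e2 : 2 * (N + 1) + 1 = 2 * N + 3 := by omega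
    rw [e1, e2]
    linear_combination h

lemma relI (hq : ‖q‖ < 1) (M : ℕ) : SS q (M + 1) - vv q (M + 1) = q * vv q M := by
  rw [SS, vv, ← Finset.sum_sub_distrib, Finset.sum_range_succ']
  have h0 : al q 0 * be q (M + 1 - 0) - q ^ (2 * 0) * (al q 0 * be q (M + 1 - 0)) = 0 := by
    simp
  rw [h0, add_zero, vv, Finset.mul_sum]
  refine Finset.sum_congr rfl ?_
  intro i hi
  rw [Finset.mem_range] at hi
  rw [show M + 1 - (i + 1) = M - i from by omega]
  have e : q ^ (2 * (i + 1)) = q ^ (2 * i + 2) := by rw [show 2 * (i + 1) = 2 * i + 2 from by omega]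
  rw [e]
  have e2 : q ^ (2 * i + 1) = q ^ (2 * i) * q := pow_succ q (2 * i)
  linear_combination be q (M - i) * recAl hq i + al q i * be q (M - i) * e2

lemma relII (hq : ‖q‖ < 1) (M : ℕ) :
    vv q (M + 1) - q ^ (2 * M + 2) * SS q (M + 1) = vv q M := by
  rw [vv, SS, Finset.mul_sum, ← Finset.sum_sub_distrib, Finset.sum_range_succ]
  have hlast : q ^ (2 * (M + 1)) * (al q (M + 1) * be q (M + 1 - (M + 1)))
      - q ^ (2 * M + 2) * (al q (M + 1) * be q (M + 1 - (M + 1))) = 0 := by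
    rw [show 2 * (M + 1) = 2 * M + 2 from by omega]; ring
  rw [hlast, add_zero, vv]
  refine Finset.sum_congr rfl ?_
  intro i hi
  rw [Finset.mem_range] at hi
  rw [show M + 1 - i = (M - i) + 1 from by omega]
  have e : q ^ (2 * M + 2) = q ^ (2 * i) * q ^ (2 * (M - i) + 2) := by
    rw [← pow_add]; congr 1; omega
  rw [e]
  linear_combination (q ^ (2 * i) * al q i) * recBe hq (M - i)

lemma relIII (hq : ‖q‖ < 1) (M : ℕ) :
    (1 + q) * vv q M = (1 + q ^ (2 * M + 1)) * SS q M := by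
  cases M with
  | zero =>
    simp [vv, SS, al_zero, be_zero]
  | succ M =>
    have e : q * q ^ (2 * M + 2) = q ^ (2 * (M + 1) + 1) := by
      rw [show 2 * (M + 1) + 1 = (2 * M + 2) + 1 from by omega, pow_succ]; ring
    linear_combination q * relII hq M - relI hq M - SS q (M + 1) * e

lemma SR (hq : ‖q‖ < 1) (M : ℕ) :
    SS q (M + 1) * (1 - q ^ (2 * M + 2)) = SS q M * (1 + q ^ (2 * M + 1)) := by
  linear_combination relI hq M + relII hq M + relIII hq M

lemma SS_zero : SS q 0 = 1 := by simp [SS, al_zero, be_zero]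

lemma ff_eq_SS (hq : ‖q‖ < 1) (N : ℕ) : ff q N = SS q N := by
  induction N with
  | zero => show cc q 0 = SS q 0; rw [cc_zero, SS_zero]
  | succ N ih =>
    have hne : (1 : ℂ) - q ^ (2 * N + 2) ≠ 0 := one_sub_pow_ne hq (by omega)
    apply mul_right_cancel₀ hne
    rw [TT hq N, ih, ← SR hq N]

lemma parity_sum (h : ℕ → ℂ) (M : ℕ) :
    ∑ n ∈ range (2 * M), h n = ∑ k ∈ range M, (h (2 * k) + h (2 * k + 1)) := by
  induction M with
  | zero => simp
  | succ M ih =>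
    rw [show 2 * (M + 1) = (2 * M + 1) + 1 from by omega, Finset.sum_range_succ,
      Finset.sum_range_succ, Finset.sum_range_succ, ih]
    ring

lemma cc_eq' (N : ℕ) : cc q N = ∑ k ∈ range (N / 2 + 1), aa q (N - 2 * k) * bb q k := by
  rw [cc]
  rw [← Finset.sum_subset (Finset.range_subset_range.mpr (show N / 2 + 1 ≤ N + 1 from by omega))
    (by intro x _ hx; rw [Finset.mem_range] at hx; rw [if_neg (by omega)])]
  refine Finset.sum_congr rfl ?_
  intro k hk
  rw [Finset.mem_range] at hk
  rw [if_pos (by omega)]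

lemma decompL (N : ℕ) :
    ∑ n ∈ range (N + 2), aa q (N + 1 - n) * bb q (n / 2) = cc q (N + 1) + cc q N := by
  rcases Nat.even_or_odd N with ⟨M, hM⟩ | ⟨M, hM⟩
  · -- N = 2M even, N+2 = 2*(M+1)
    rw [show N + 2 = 2 * (M + 1) from by omega, parity_sum, Finset.sum_add_distrib]
    congr 1
    · rw [cc_eq' (q := q) (N + 1), show (N + 1) / 2 + 1 = M + 1 from by omega]
      refine Finset.sum_congr rfl ?_
      intro k hk
      rw [Finset.mem_range] at hk
      rw [show 2 * k / 2 = k from by omega]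
    · rw [cc_eq' (q := q) N, show N / 2 + 1 = M + 1 from by omega]
      refine Finset.sum_congr rfl ?_
      intro k hk
      rw [Finset.mem_range] at hk
      rw [show N + 1 - (2 * k + 1) = N - 2 * k from by omega,
        show (2 * k + 1) / 2 = k from by omega]
  · -- N = 2M+1 odd, N+2 = 2*(M+1)+1
    rw [show N + 2 = (2 * (M + 1)) + 1 from by omega, Finset.sum_range_succ, parity_sum,
      Finset.sum_add_distrib]
    have hlast : aa q (N + 1 - 2 * (M + 1)) * bb q (2 * (M + 1) / 2) = aa q 0 * bb q (M + 1) := by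
      rw [show N + 1 - 2 * (M + 1) = 0 from by omega, show 2 * (M + 1) / 2 = M + 1 from by omega]
    rw [hlast]
    have h1 : (∑ k ∈ range (M + 1), aa q (N + 1 - 2 * k) * bb q (2 * k / 2))
        + aa q 0 * bb q (M + 1) = cc q (N + 1) := by
      conv_rhs => rw [cc_eq' (q := q) (N + 1)]
      rw [show (N + 1) / 2 + 1 = M + 2 from by omega]
      conv_rhs => rw [Finset.sum_range_succ]
      congr 1
      · refine Finset.sum_congr rfl ?_
        intro k hk
        rw [Finset.mem_range] at hk
        rw [show 2 * k / 2 = k from by omega]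
      · rw [show N + 1 - 2 * (M + 1) = 0 from by omega]
    have h2 : (∑ k ∈ range (M + 1), aa q (N + 1 - (2 * k + 1)) * bb q ((2 * k + 1) / 2))
        = cc q N := by
      rw [cc_eq' (q := q) N, show N / 2 + 1 = M + 1 from by omega]
      refine Finset.sum_congr rfl ?_
      intro k hk
      rw [Finset.mem_range] at hk
      rw [show N + 1 - (2 * k + 1) = N - 2 * k from by omega,
        show (2 * k + 1) / 2 = k from by omega]
    rw [← h1, ← h2]
    ring

lemma prod_one_sub_ge (f : ℕ → ℝ) (s : Finset ℕ) (h0 : ∀ i ∈ s, 0 ≤ f i)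
    (h1 : ∀ i ∈ s, f i ≤ 1) : 1 - ∑ i ∈ s, f i ≤ ∏ i ∈ s, (1 - f i) := by
  induction s using Finset.induction_on with
  | empty => simp
  | insert a s ha ih0 =>
    rw [Finset.sum_insert ha, Finset.prod_insert ha]
    have hfa0 : 0 ≤ f a := h0 a (Finset.mem_insert_self a s)
    have hfa1 : f a ≤ 1 := h1 a (Finset.mem_insert_self a s)
    have ihs : 1 - ∑ i ∈ s, f i ≤ ∏ i ∈ s, (1 - f i) :=
      ih0 (fun i hi => h0 i (Finset.mem_insert_of_mem hi))
        (fun i hi => h1 i (Finset.mem_insert_of_mem hi))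
    have hsum0 : 0 ≤ ∑ i ∈ s, f i := Finset.sum_nonneg (fun i hi => h0 i (Finset.mem_insert_of_mem hi))
    nlinarith [mul_le_mul_of_nonneg_left ihs (by linarith : (0:ℝ) ≤ 1 - f a)]

lemma pochLower (hq : ‖q‖ < 1) :
    ∃ c : ℝ, 0 < c ∧ ∀ (s n : ℕ), 1 ≤ s → c ≤ ‖qPoch (q ^ s) (q ^ s) n‖ := by
  set t := ‖q‖ with hT
  have ht0 : 0 ≤ t := norm_nonneg q
  have ht1 : t < 1 := hq
  have hfacpos : ∀ j : ℕ, 0 < 1 - t ^ (j + 1) := by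
    intro j
    have h : t ^ (j + 1) ≤ t ^ 1 := pow_le_pow_of_le_one ht0 ht1.le (by omega)
    rw [pow_one] at h; linarith
  have hfac0 : ∀ j : ℕ, 0 ≤ 1 - t ^ (j + 1) := fun j => (hfacpos j).le
  obtain ⟨J, hJ⟩ := exists_pow_lt_of_lt_one (x := (1 - t) / 2) (by linarith) ht1
  set P : ℕ → ℝ := fun n => ∏ j ∈ range n, (1 - t ^ (j + 1)) with hPdef
  have hPpos : ∀ n, 0 < P n := fun n => Finset.prod_pos (fun j _ => hfacpos j)
  have hlow : ∀ n, P J / 2 ≤ P n := by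
    intro n
    rcases le_or_gt n J with h | h
    · have h2 : P J ≤ P n := by
        simp only [hPdef]
        rw [← Finset.prod_range_mul_prod_Ico _ h]
        calc (∏ j ∈ range n, (1 - t ^ (j + 1))) * ∏ j ∈ Ico n J, (1 - t ^ (j + 1))
            ≤ (∏ j ∈ range n, (1 - t ^ (j + 1))) * 1 := by
              refine mul_le_mul_of_nonneg_left ?_ (hPpos n).le
              refine Finset.prod_le_one (fun j _ => hfac0 j) (fun j _ => ?_)
              have := pow_nonneg ht0 (j + 1); linarith
          _ = ∏ j ∈ range n, (1 - t ^ (j + 1)) := mul_one _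
      have := hPpos J; linarith
    · have hsplit : P J * ∏ j ∈ Ico J n, (1 - t ^ (j + 1)) = P n :=
        Finset.prod_range_mul_prod_Ico _ h.le
      have htail : (1 : ℝ) / 2 ≤ ∏ j ∈ Ico J n, (1 - t ^ (j + 1)) := by
        have hs : ∑ j ∈ Ico J n, t ^ (j + 1) ≤ 1 / 2 := by
          rw [Finset.sum_Ico_eq_sum_range]
          calc ∑ k ∈ range (n - J), t ^ (J + k + 1)
              = ∑ k ∈ range (n - J), t ^ (J + 1) * t ^ k := by
                refine Finset.sum_congr rfl (fun k _ => ?_)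
                rw [← pow_add]; congr 1; omega
            _ = t ^ (J + 1) * ∑ k ∈ range (n - J), t ^ k := by rw [Finset.mul_sum]
            _ ≤ t ^ (J + 1) * (1 - t)⁻¹ := by
                refine mul_le_mul_of_nonneg_left ?_ (pow_nonneg ht0 _)
                exact (Summable.sum_le_tsum _ (fun i _ => pow_nonneg ht0 i)
                  (summable_geometric_of_lt_one ht0 ht1)).trans
                  (le_of_eq (tsum_geometric_of_lt_one ht0 ht1))
            _ ≤ 1 / 2 := by
                have h1 : t ^ (J + 1) ≤ t ^ J := pow_le_pow_of_le_one ht0 ht1.le (by omega)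
                have h2 : (0 : ℝ) < 1 - t := by linarith
                have h3 : t ^ (J + 1) ≤ (1 - t) / 2 := by linarith
                calc t ^ (J + 1) * (1 - t)⁻¹ ≤ ((1 - t) / 2) * (1 - t)⁻¹ :=
                      mul_le_mul_of_nonneg_right h3 (inv_nonneg.mpr h2.le)
                  _ = 1 / 2 := by field_simp
        have hge := prod_one_sub_ge (fun j => t ^ (j + 1)) (Ico J n)
          (fun i _ => pow_nonneg ht0 _) (fun i _ => (pow_le_one₀ ht0 ht1.le))
        linarith
      calc P J / 2 = P J * (1 / 2) := by ring
        _ ≤ P J * ∏ j ∈ Ico J n, (1 - t ^ (j + 1)) :=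
            mul_le_mul_of_nonneg_left htail (hPpos J).le
        _ = P n := hsplit
  refine ⟨P J / 2, by have := hPpos J; linarith, ?_⟩
  intro s n hs
  refine le_trans (hlow n) ?_
  rw [qPoch, norm_prod]
  refine Finset.prod_le_prod (fun j _ => hfac0 j) (fun j _ => ?_)
  have e : q ^ s * (q ^ s) ^ j = q ^ (s * (j + 1)) := by
    rw [← pow_succ' (q ^ s) j, ← pow_mul]
  calc 1 - t ^ (j + 1) ≤ 1 - t ^ (s * (j + 1)) := by
        have h : t ^ (s * (j + 1)) ≤ t ^ (j + 1) :=
          pow_le_pow_of_le_one ht0 ht1.le (by nlinarith)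
        linarith
    _ = 1 - ‖q ^ s * (q ^ s) ^ j‖ := by rw [e, norm_pow, hT]
    _ ≤ ‖1 - q ^ s * (q ^ s) ^ j‖ := by
        have := norm_sub_norm_le (1 : ℂ) (q ^ s * (q ^ s) ^ j)
        simpa using this

lemma expL (m n : ℕ) : m + n ≤ (3 * m ^ 2 + m) / 2 + 2 * m * n + n ^ 2 := by
  have h1 : m ≤ m ^ 2 := Nat.le_self_pow two_ne_zero m
  have h2 : n ≤ n ^ 2 := Nat.le_self_pow two_ne_zero n
  have e5 : 2 * m * n = 2 * (m * n) := by ring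
  omega

lemma expR (m n : ℕ) : m + n ≤ 2 * m ^ 2 + 2 * m * n + n ^ 2 := by
  have h1 : m ≤ m ^ 2 := Nat.le_self_pow two_ne_zero m
  have h2 : n ≤ n ^ 2 := Nat.le_self_pow two_ne_zero n
  have e5 : 2 * m * n = 2 * (m * n) := by ring
  omega

lemma summable_aux (hq : ‖q‖ < 1) {E : ℕ × ℕ → ℕ} {D1 D2 : ℕ × ℕ → ℂ} {c : ℝ} (hc : 0 < c)
    (hE : ∀ p : ℕ × ℕ, p.1 + p.2 ≤ E p) (h1 : ∀ p, c ≤ ‖D1 p‖) (h2 : ∀ p, c ≤ ‖D2 p‖) :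
    Summable (fun p : ℕ × ℕ => q ^ E p / (D1 p * D2 p)) := by
  set t := ‖q‖ with hT
  have ht0 : 0 ≤ t := norm_nonneg q
  have ht1 : t < 1 := hq
  have hg : Summable (fun p : ℕ × ℕ => t ^ p.1 * t ^ p.2 / (c * c)) :=
    Summable.div_const (Summable.mul_of_nonneg (summable_geometric_of_lt_one ht0 ht1)
      (summable_geometric_of_lt_one ht0 ht1) (fun i => pow_nonneg ht0 i)
      (fun j => pow_nonneg ht0 j)) (c * c)
  refine Summable.of_norm_bounded hg ?_
  intro p
  rw [norm_div, norm_pow, norm_mul, ← hT]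
  have hden : c * c ≤ ‖D1 p‖ * ‖D2 p‖ :=
    mul_le_mul (h1 p) (h2 p) hc.le (norm_nonneg _)
  have hnum : t ^ E p ≤ t ^ (p.1 + p.2) := pow_le_pow_of_le_one ht0 ht1.le (hE p)
  calc t ^ E p / (‖D1 p‖ * ‖D2 p‖) ≤ t ^ (p.1 + p.2) / (c * c) :=
        div_le_div₀ (pow_nonneg ht0 _) hnum (by positivity) hden
    _ = t ^ p.1 * t ^ p.2 / (c * c) := by rw [pow_add]

lemma summableL (hq : ‖q‖ < 1) :
    Summable (fun p : ℕ × ℕ => q ^ ((3 * p.1 ^ 2 + p.1) / 2 + 2 * p.1 * p.2 + p.2 ^ 2)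
      / (qPoch q q p.1 * qPoch (q ^ 4) (q ^ 4) (p.2 / 2))) := by
  obtain ⟨c, hc, hcb⟩ := pochLower hq
  refine summable_aux hq hc (fun p => expL p.1 p.2) (fun p => ?_) (fun p => ?_)
  · have := hcb 1 p.1 le_rfl; simpa using this
  · exact hcb 4 (p.2 / 2) (by norm_num)

lemma summableR (hq : ‖q‖ < 1) :
    Summable (fun p : ℕ × ℕ => q ^ (2 * p.1 ^ 2 + 2 * p.1 * p.2 + p.2 ^ 2)
      / (qPoch (q ^ 2) (q ^ 2) p.1 * qPoch (q ^ 2) (q ^ 2) p.2)) := by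
  obtain ⟨c, hc, hcb⟩ := pochLower hq
  exact summable_aux hq hc (fun p => expR p.1 p.2) (fun p => hcb 2 p.1 (by norm_num))
    (fun p => hcb 2 p.2 (by norm_num))

lemma tsum_group (F : ℕ × ℕ → ℂ) (h : Summable F) :
    ∑' p : ℕ × ℕ, F p = ∑' N : ℕ, ∑ p ∈ Finset.HasAntidiagonal.antidiagonal N, F p := by
  have h2 : Summable (fun x : Σ n : ℕ, (Finset.HasAntidiagonal.antidiagonal n : Finset (ℕ × ℕ)) => F x.2) :=
    Finset.HasAntidiagonal.sigmaAntidiagonalEquivProd.summable_iff.mpr h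
  calc ∑' p : ℕ × ℕ, F p
      = ∑' x : Σ n : ℕ, (Finset.HasAntidiagonal.antidiagonal n : Finset (ℕ × ℕ)), F x.2 :=
        (Finset.HasAntidiagonal.sigmaAntidiagonalEquivProd.tsum_eq F).symm
    _ = ∑' (N : ℕ) (p : (Finset.HasAntidiagonal.antidiagonal N : Finset (ℕ × ℕ))), F p :=
        Summable.tsum_sigma' (fun n => (hasSum_fintype _).summable) h2
    _ = ∑' N : ℕ, ∑ p ∈ Finset.HasAntidiagonal.antidiagonal N, F p :=
        tsum_congr (fun N => Finset.tsum_subtype _ F)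

lemma decomp_all (hq : ‖q‖ < 1) (N : ℕ) :
    ∑ n ∈ range (N + 1), aa q (N - n) * bb q (n / 2) = ff q N := by
  cases N with
  | zero => simp [ff, aa_zero, bb_zero, cc_zero]
  | succ N => exact decompL (q := q) N

lemma fiberL (hq : ‖q‖ < 1) (N : ℕ) :
    ∑ p ∈ Finset.HasAntidiagonal.antidiagonal N,
        q ^ ((3 * p.1 ^ 2 + p.1) / 2 + 2 * p.1 * p.2 + p.2 ^ 2)
          / (qPoch q q p.1 * qPoch (q ^ 4) (q ^ 4) (p.2 / 2))
      = q ^ (N ^ 2) * ff q N := by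
  rw [Finset.Nat.sum_antidiagonal_eq_sum_range_succ_mk]
  have step1 : ∀ k ∈ range (N + 1),
      q ^ ((3 * k ^ 2 + k) / 2 + 2 * k * (N - k) + (N - k) ^ 2)
          / (qPoch q q k * qPoch (q ^ 4) (q ^ 4) ((N - k) / 2))
        = q ^ (N ^ 2) * (aa q k * bb q ((N - k) / 2)) := by
    intro k hk
    rw [Finset.mem_range] at hk
    have hexp : (3 * k ^ 2 + k) / 2 + 2 * k * (N - k) + (N - k) ^ 2
        = N ^ 2 + k * (k + 1) / 2 := by
      obtain ⟨j, hj⟩ : ∃ j, N = k + j := ⟨N - k, by omega⟩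
      subst hj
      rw [show k + j - k = j from by omega]
      obtain ⟨u, hu⟩ := Nat.even_mul_succ_self k
      have e1 : k * (k + 1) = k * k + k := by ring
      have e2 : (k + j) ^ 2 = k * k + 2 * (k * j) + j * j := by ring
      have e3 : k ^ 2 = k * k := sq k
      have e4 : j ^ 2 = j * j := sq j
      have e5 : 2 * k * j = 2 * (k * j) := by ring
      omega
    have hne1 : qPoch q q k ≠ 0 := qPoch_q_ne hq k
    have hne2 : qPoch (q ^ 4) (q ^ 4) ((N - k) / 2) ≠ 0 :=
      qPoch_pow_ne hq 4 (by norm_num) _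
    rw [hexp, aa, bb, pow_add]
    field_simp
  rw [Finset.sum_congr rfl step1, ← Finset.mul_sum]
  congr 1
  rw [← decomp_all hq N]
  rw [← Finset.sum_range_reflect (fun n => aa q (N - n) * bb q (n / 2)) (N + 1)]
  refine Finset.sum_congr rfl ?_
  intro j hj
  rw [Finset.mem_range] at hj
  rw [show N + 1 - 1 - j = N - j from by omega, show N - (N - j) = j from by omega]

lemma fiberR (hq : ‖q‖ < 1) (N : ℕ) :
    ∑ p ∈ Finset.HasAntidiagonal.antidiagonal N,
        q ^ (2 * p.1 ^ 2 + 2 * p.1 * p.2 + p.2 ^ 2)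
          / (qPoch (q ^ 2) (q ^ 2) p.1 * qPoch (q ^ 2) (q ^ 2) p.2)
      = q ^ (N ^ 2) * SS q N := by
  rw [Finset.Nat.sum_antidiagonal_eq_sum_range_succ_mk, SS, Finset.mul_sum]
  refine Finset.sum_congr rfl ?_
  intro i hi
  rw [Finset.mem_range] at hi
  have hexp : 2 * i ^ 2 + 2 * i * (N - i) + (N - i) ^ 2 = N ^ 2 + i ^ 2 := by
    obtain ⟨j, hj⟩ : ∃ j, N = i + j := ⟨N - i, by omega⟩
    subst hj
    rw [show i + j - i = j from by omega]
    have e2 : (i + j) ^ 2 = i * i + 2 * (i * j) + j * j := by ring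
    have e3 : i ^ 2 = i * i := sq i
    have e4 : j ^ 2 = j * j := sq j
    have e5 : 2 * i * j = 2 * (i * j) := by ring
    omega
  have hne1 : qPoch (q ^ 2) (q ^ 2) i ≠ 0 := qPoch_pow_ne hq 2 (by norm_num) i
  have hne2 : qPoch (q ^ 2) (q ^ 2) (N - i) ≠ 0 := qPoch_pow_ne hq 2 (by norm_num) _
  rw [hexp, al, be, pow_add]
  field_simp

end Stmt6Aux


/-- first Göllnitz–Gordon double-sum comparison (limit `N → ∞`). -/
theorem stmt6 (q : ℂ) (hq : ‖q‖ < 1) :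
    ∑' p : ℕ × ℕ, q ^ ((3 * p.1 ^ 2 + p.1) / 2 + 2 * p.1 * p.2 + p.2 ^ 2)
        / (qPoch q q p.1 * qPoch (q ^ 4) (q ^ 4) (p.2 / 2))
      = ∑' p : ℕ × ℕ, q ^ (2 * p.1 ^ 2 + 2 * p.1 * p.2 + p.2 ^ 2)
          / (qPoch (q ^ 2) (q ^ 2) p.1 * qPoch (q ^ 2) (q ^ 2) p.2) := by
  rw [Stmt6Aux.tsum_group _ (Stmt6Aux.summableL hq),
    Stmt6Aux.tsum_group _ (Stmt6Aux.summableR hq)]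
  refine tsum_congr fun N => ?_
  rw [Stmt6Aux.fiberL hq N, Stmt6Aux.fiberR hq N, Stmt6Aux.ff_eq_SS hq N]
end

section
/- ∑_{m,n≥0} q^{(3m²+m)/2 + 2mn + n² + 2m + 2n} / ((q;q)_m (q^4;q^4)_{⌊n/2⌋}) = ∑_{m,n≥0} q^{2m² + 2mn + n² + 2m + 2n} / ((q^2;q^2)_m (q^2;q^2)_n) as formal power series (or for |q| < 1). -/
open Finset

namespace Stmt7Aux

variable {q : ℂ}


noncomputable def aa (q : ℂ) (m : ℕ) : ℂ := q ^ (m * (m + 1) / 2) / qPoch q q m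
noncomputable def uu (q : ℂ) (j : ℕ) : ℂ := 1 / qPoch (q ^ 4) (q ^ 4) j
noncomputable def cc (q : ℂ) (m : ℕ) : ℂ := q ^ (m ^ 2) / qPoch (q ^ 2) (q ^ 2) m
noncomputable def dd (q : ℂ) (k : ℕ) : ℂ := 1 / qPoch (q ^ 2) (q ^ 2) k
noncomputable def PP (q : ℂ) (N : ℕ) : ℂ := ∑ j ∈ range (N / 2 + 1), aa q (N - 2 * j) * uu q j
noncomputable def ll (q : ℂ) (N : ℕ) : ℂ := ∑ m ∈ range (N + 1), aa q m * uu q ((N - m) / 2)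
noncomputable def rr (q : ℂ) (N : ℕ) : ℂ := ∑ m ∈ range (N + 1), cc q m * dd q (N - m)

variable {q : ℂ}

lemma one_sub_ne (hq : ‖q‖ < 1) (k : ℕ) (hk : k ≠ 0) : (1 : ℂ) - q ^ k ≠ 0 := by
  intro h
  have h1 : q ^ k = 1 := by linear_combination -h
  have h2 : ‖q‖ ^ k < 1 := pow_lt_one₀ (norm_nonneg q) hq hk
  rw [← norm_pow, h1, norm_one] at h2
  exact lt_irrefl 1 h2

lemma pochq_ne (hq : ‖q‖ < 1) (m : ℕ) : qPoch q q m ≠ 0 := by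
  refine Finset.prod_ne_zero_iff.mpr fun j _ => ?_
  rw [← pow_succ']
  exact one_sub_ne hq (j + 1) (by omega)

lemma poch2_ne (hq : ‖q‖ < 1) (m : ℕ) : qPoch (q ^ 2) (q ^ 2) m ≠ 0 := by
  refine Finset.prod_ne_zero_iff.mpr fun j _ => ?_
  rw [← pow_succ', ← pow_mul]
  exact one_sub_ne hq (2 * (j + 1)) (by omega)

lemma poch4_ne (hq : ‖q‖ < 1) (m : ℕ) : qPoch (q ^ 4) (q ^ 4) m ≠ 0 := by
  refine Finset.prod_ne_zero_iff.mpr fun j _ => ?_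
  rw [← pow_succ', ← pow_mul]
  exact one_sub_ne hq (4 * (j + 1)) (by omega)

lemma qPoch_succ (a x : ℂ) (n : ℕ) : qPoch a x (n + 1) = qPoch a x n * (1 - a * x ^ n) :=
  Finset.prod_range_succ _ _

lemma ha (hq : ‖q‖ < 1) (m : ℕ) :
    (1 - q ^ (m + 1)) * aa q (m + 1) = q ^ (m + 1) * aa q m := by
  have hp : qPoch q q (m + 1) = qPoch q q m * (1 - q ^ (m + 1)) := by
    rw [qPoch_succ, ← pow_succ']
  have he : (m + 1) * (m + 1 + 1) / 2 = m * (m + 1) / 2 + (m + 1) := by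
    obtain ⟨w, hw⟩ := Nat.even_mul_succ_self m
    have h2 : (m + 1) * (m + 1 + 1) = m * (m + 1) + (m + 1) * 2 := by ring
    rw [h2, hw]
    omega
  have h1 := pochq_ne hq m
  have h2 := one_sub_ne hq (m + 1) (by omega)
  rw [aa, aa, hp, he, mul_div_assoc', mul_div_assoc',
    div_eq_div_iff (mul_ne_zero h1 h2) h1]
  ring

lemma hu (hq : ‖q‖ < 1) (j : ℕ) :
    (1 - q ^ (4 * (j + 1))) * uu q (j + 1) = uu q j := by
  have hp : qPoch (q ^ 4) (q ^ 4) (j + 1)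
      = qPoch (q ^ 4) (q ^ 4) j * (1 - q ^ (4 * (j + 1))) := by
    rw [qPoch_succ, ← pow_succ', ← pow_mul]
  rw [uu, uu, hp]
  have h1 := poch4_ne hq j
  have h2 := one_sub_ne hq (4 * (j + 1)) (by omega)
  field_simp

lemma hc (hq : ‖q‖ < 1) (m : ℕ) :
    (1 - q ^ (2 * (m + 1))) * cc q (m + 1) = q ^ (2 * m + 1) * cc q m := by
  have hp : qPoch (q ^ 2) (q ^ 2) (m + 1)
      = qPoch (q ^ 2) (q ^ 2) m * (1 - q ^ (2 * (m + 1))) := by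
    rw [qPoch_succ, ← pow_succ', ← pow_mul]
  have he : (m + 1) ^ 2 = m ^ 2 + (2 * m + 1) := by ring
  have h1 := poch2_ne hq m
  have h2 := one_sub_ne hq (2 * (m + 1)) (by omega)
  rw [cc, cc, hp, he, mul_div_assoc', mul_div_assoc',
    div_eq_div_iff (mul_ne_zero h1 h2) h1]
  ring

lemma hd (hq : ‖q‖ < 1) (k : ℕ) :
    (1 - q ^ (2 * (k + 1))) * dd q (k + 1) = dd q k := by
  have hp : qPoch (q ^ 2) (q ^ 2) (k + 1)
      = qPoch (q ^ 2) (q ^ 2) k * (1 - q ^ (2 * (k + 1))) := by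
    rw [qPoch_succ, ← pow_succ', ← pow_mul]
  rw [dd, dd, hp]
  have h1 := poch2_ne hq k
  have h2 := one_sub_ne hq (2 * (k + 1)) (by omega)
  field_simp


lemma rr_rec (hq : ‖q‖ < 1) (M : ℕ) :
    (1 - q ^ (2 * (M + 1))) * rr q (M + 1) = (1 + q ^ (2 * M + 1)) * rr q M := by
  have key : ∀ m ∈ range (M + 2),
      (1 - q ^ (2 * (M + 1))) * (cc q m * dd q (M + 1 - m))
        = cc q m * ((1 - q ^ (2 * (M + 1 - m))) * dd q (M + 1 - m))
          + (q ^ (2 * (M + 1 - m)) * ((1 - q ^ (2 * m)) * cc q m)) * dd q (M + 1 - m) := by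
    intro m hm
    simp only [mem_range] at hm
    have hpow : q ^ (2 * (M + 1 - m)) * q ^ (2 * m) = q ^ (2 * (M + 1)) := by
      rw [← pow_add]; congr 1; omega
    linear_combination (cc q m * dd q (M + 1 - m)) * hpow
  rw [rr, mul_sum, sum_congr rfl key, sum_add_distrib]
  have hA : ∑ m ∈ range (M + 2), cc q m * ((1 - q ^ (2 * (M + 1 - m))) * dd q (M + 1 - m))
      = rr q M := by
    rw [sum_range_succ]
    have hz : M + 1 - (M + 1) = 0 := by omega
    rw [hz]
    simp only [Nat.mul_zero, pow_zero, sub_self, zero_mul, mul_zero, add_zero]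
    rw [rr]
    refine sum_congr rfl fun m hm => ?_
    simp only [mem_range] at hm
    have h1 : M + 1 - m = (M - m) + 1 := by omega
    rw [h1, hd hq (M - m)]
  have hB : ∑ m ∈ range (M + 2),
      (q ^ (2 * (M + 1 - m)) * ((1 - q ^ (2 * m)) * cc q m)) * dd q (M + 1 - m)
      = q ^ (2 * M + 1) * rr q M := by
    rw [sum_range_succ']
    simp only [Nat.mul_zero, pow_zero, sub_self, zero_mul, mul_zero, add_zero]
    rw [rr, mul_sum]
    refine sum_congr rfl fun i hi => ?_
    simp only [mem_range] at hi
    have h1 : M + 1 - (i + 1) = M - i := by omega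
    rw [h1, hc hq i]
    have hpow : q ^ (2 * (M - i)) * q ^ (2 * i + 1) = q ^ (2 * M + 1) := by
      rw [← pow_add]; congr 1; omega
    linear_combination (cc q i * dd q (M - i)) * hpow
  rw [hA, hB]
  ring

lemma sum_range_even_odd (g : ℕ → ℂ) (M : ℕ) :
    ∑ k ∈ range M, g k
      = (∑ j ∈ range ((M + 1) / 2), g (2 * j)) + ∑ j ∈ range (M / 2), g (2 * j + 1) := by
  induction M with
  | zero => simp
  | succ M ih =>
    rw [sum_range_succ, ih]
    rcases Nat.even_or_odd M with ⟨t, ht⟩ | ⟨t, ht⟩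
    · subst ht
      have h1 : (t + t + 1 + 1) / 2 = t + 1 := by omega
      have h2 : (t + t + 1) / 2 = t := by omega
      have h3 : (t + t) / 2 = t := by omega
      rw [h1, h2, h3, sum_range_succ, show 2 * t = t + t by ring]
      ring
    · subst ht
      have h1 : (2 * t + 1 + 1 + 1) / 2 = t + 1 := by omega
      have h2 : (2 * t + 1 + 1) / 2 = t + 1 := by omega
      have h3 : (2 * t + 1) / 2 = t := by omega
      rw [h1, h2, h3, sum_range_succ (fun x => g (2 * x + 1)) t]
      ring

lemma ll_eq_PP (N : ℕ) (hN : 1 ≤ N) : ll q N = PP q N + PP q (N - 1) := by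
  rw [ll, ← sum_range_reflect]
  have step1 : ∀ k ∈ range (N + 1),
      aa q (N + 1 - 1 - k) * uu q ((N - (N + 1 - 1 - k)) / 2)
        = aa q (N - k) * uu q (k / 2) := by
    intro k hk
    simp only [mem_range] at hk
    have h1 : N + 1 - 1 - k = N - k := by omega
    have h2 : N - (N - k) = k := by omega
    rw [h1, h2]
  rw [sum_congr rfl step1, sum_range_even_odd (fun k => aa q (N - k) * uu q (k / 2)) (N + 1)]
  have hE : ∑ j ∈ range ((N + 1 + 1) / 2), aa q (N - 2 * j) * uu q (2 * j / 2) = PP q N := by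
    rw [PP, show (N + 1 + 1) / 2 = N / 2 + 1 by omega]
    refine sum_congr rfl fun j _ => ?_
    rw [show 2 * j / 2 = j by omega]
  have hO : ∑ j ∈ range ((N + 1) / 2), aa q (N - (2 * j + 1)) * uu q ((2 * j + 1) / 2)
      = PP q (N - 1) := by
    rw [PP, show (N - 1) / 2 + 1 = (N + 1) / 2 by omega]
    refine sum_congr rfl fun j _ => ?_
    rw [show (2 * j + 1) / 2 = j by omega, show N - (2 * j + 1) = N - 1 - 2 * j by omega]
  rw [hE, hO]

lemma diamond (hq : ‖q‖ < 1) (N : ℕ) (hN : 2 ≤ N) :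
    (1 - q ^ (2 * N)) * PP q N
      = (q ^ (2 * N - 1) + q ^ (2 * N)) * PP q (N - 1)
        + (1 + q ^ (2 * N - 1)) * PP q (N - 2) := by
  have step1 : (1 - q ^ (2 * N)) * PP q N
      = (∑ j ∈ range (N / 2 + 1), (1 - q ^ (4 * j)) * (aa q (N - 2 * j) * uu q j))
        + ∑ j ∈ range (N / 2 + 1), (q ^ (4 * j) - q ^ (2 * N)) * (aa q (N - 2 * j) * uu q j) := by
    rw [PP, mul_sum, ← sum_add_distrib]
    refine sum_congr rfl fun j hj => ?_
    ring
  have hS1 : ∑ j ∈ range (N / 2 + 1), (1 - q ^ (4 * j)) * (aa q (N - 2 * j) * uu q j)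
      = PP q (N - 2) := by
    rw [show N / 2 + 1 = ((N - 2) / 2 + 1) + 1 by omega, sum_range_succ']
    simp only [Nat.mul_zero, pow_zero, sub_self, zero_mul, add_zero]
    rw [PP]
    refine sum_congr rfl fun j hj => ?_
    rw [show N - 2 * (j + 1) = N - 2 - 2 * j by omega]
    calc (1 - q ^ (4 * (j + 1))) * (aa q (N - 2 - 2 * j) * uu q (j + 1))
        = aa q (N - 2 - 2 * j) * ((1 - q ^ (4 * (j + 1))) * uu q (j + 1)) := by ring
      _ = aa q (N - 2 - 2 * j) * uu q j := by rw [hu hq j]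
  rw [step1, hS1]
  rcases Nat.even_or_odd N with ⟨t, rfl⟩ | ⟨t, rfl⟩
  · -- N = t + t, t ≥ 1
    have ht : 1 ≤ t := by omega
    have key2 : ∀ j ∈ range t,
        (q ^ (4 * j) - q ^ (2 * (t + t))) * (aa q (t + t - 2 * j) * uu q j)
          = q ^ (4 * t - 1) * (aa q (t + t - 1 - 2 * j) * uu q j)
            + q ^ (4 * t - 1) * (aa q (t + t - 2 - 2 * j) * uu q j)
            + q ^ (4 * t) * (aa q (t + t - 1 - 2 * j) * uu q j) := by
      intro j hj
      simp only [mem_range] at hj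
      obtain ⟨i, rfl⟩ : ∃ i, t = j + 1 + i := ⟨t - (j + 1), by omega⟩
      rw [show (j + 1 + i) + (j + 1 + i) - 2 * j = 2 * i + 2 by omega,
        show (j + 1 + i) + (j + 1 + i) - 1 - 2 * j = 2 * i + 1 by omega,
        show (j + 1 + i) + (j + 1 + i) - 2 - 2 * j = 2 * i by omega,
        show 4 * (j + 1 + i) - 1 = 4 * j + (4 * i + 3) by omega,
        show 4 * (j + 1 + i) = 4 * j + (4 * i + 4) by omega,
        show 2 * ((j + 1 + i) + (j + 1 + i)) = 4 * j + (4 * i + 4) by omega]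
      have E1 := ha hq (2 * i + 1)
      rw [show 2 * i + 1 + 1 = 2 * i + 2 by omega] at E1
      have E2 := ha hq (2 * i)
      linear_combination (uu q j * q ^ (4 * j) * (1 + q ^ (2 * i + 2))) * E1
        + (uu q j * q ^ (4 * j) * q ^ (2 * i + 2)) * E2
    have hPP1 : PP q (t + t - 1) = ∑ j ∈ range t, aa q (t + t - 1 - 2 * j) * uu q j := by
      rw [PP, show (t + t - 1) / 2 + 1 = t by omega]
    have hPP2 : PP q (t + t - 2) = ∑ j ∈ range t, aa q (t + t - 2 - 2 * j) * uu q j := by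
      rw [PP, show (t + t - 2) / 2 + 1 = t by omega]
    have hS2 : ∑ j ∈ range ((t + t) / 2 + 1),
        (q ^ (4 * j) - q ^ (2 * (t + t))) * (aa q (t + t - 2 * j) * uu q j)
        = q ^ (4 * t - 1) * PP q (t + t - 1) + q ^ (4 * t - 1) * PP q (t + t - 2)
          + q ^ (4 * t) * PP q (t + t - 1) := by
      rw [show (t + t) / 2 + 1 = t + 1 by omega, sum_range_succ, sum_congr rfl key2,
        show 2 * (t + t) = 4 * t by ring]
      simp only [sub_self, zero_mul, add_zero]
      rw [sum_add_distrib, sum_add_distrib,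
        ← mul_sum, ← mul_sum, ← mul_sum, ← hPP1, ← hPP2]
    rw [hS2, hPP1, hPP2,
      show 2 * (t + t) - 1 = 4 * t - 1 by omega, show 2 * (t + t) = 4 * t by omega]
    ring
  · -- N = 2 * t + 1, t ≥ 1
    have ht : 1 ≤ t := by omega
    have key2 : ∀ j ∈ range t,
        (q ^ (4 * j) - q ^ (2 * (2 * t + 1))) * (aa q (2 * t + 1 - 2 * j) * uu q j)
          = q ^ (4 * t + 1) * (aa q (2 * t - 2 * j) * uu q j)
            + q ^ (4 * t + 2) * (aa q (2 * t - 2 * j) * uu q j)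
            + q ^ (4 * t + 1) * (aa q (2 * t - 1 - 2 * j) * uu q j) := by
      intro j hj
      simp only [mem_range] at hj
      obtain ⟨i, rfl⟩ : ∃ i, t = j + 1 + i := ⟨t - (j + 1), by omega⟩
      rw [show 2 * (j + 1 + i) + 1 - 2 * j = 2 * i + 3 by omega,
        show 2 * (j + 1 + i) - 2 * j = 2 * i + 2 by omega,
        show 2 * (j + 1 + i) - 1 - 2 * j = 2 * i + 1 by omega,
        show 4 * (j + 1 + i) + 1 = 4 * j + (4 * i + 5) by omega,
        show 4 * (j + 1 + i) + 2 = 4 * j + (4 * i + 6) by omega,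
        show 2 * (2 * (j + 1 + i) + 1) = 4 * j + (4 * i + 6) by omega]
      have E1 := ha hq (2 * i + 2)
      rw [show 2 * i + 2 + 1 = 2 * i + 3 by omega] at E1
      have E2 := ha hq (2 * i + 1)
      rw [show 2 * i + 1 + 1 = 2 * i + 2 by omega] at E2
      linear_combination (uu q j * q ^ (4 * j) * (1 + q ^ (2 * i + 3))) * E1
        + (uu q j * q ^ (4 * j) * q ^ (2 * i + 3)) * E2
    have keyLast :
        (q ^ (4 * t) - q ^ (2 * (2 * t + 1))) * (aa q (2 * t + 1 - 2 * t) * uu q t)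
          = q ^ (4 * t + 1) * (aa q (2 * t - 2 * t) * uu q t)
            + q ^ (4 * t + 2) * (aa q (2 * t - 2 * t) * uu q t) := by
      rw [show 2 * t + 1 - 2 * t = 1 by omega, show 2 * t - 2 * t = 0 by omega,
        show 2 * (2 * t + 1) = 4 * t + 2 by omega]
      have E1 := ha hq 0
      norm_num at E1
      linear_combination (uu q t * q ^ (4 * t) * (1 + q)) * E1
    have hPP1 : PP q (2 * t + 1 - 1)
        = (∑ j ∈ range t, aa q (2 * t - 2 * j) * uu q j) + aa q (2 * t - 2 * t) * uu q t := by
      rw [PP, show 2 * t + 1 - 1 = 2 * t by omega, show 2 * t / 2 + 1 = t + 1 by omega,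
        sum_range_succ]
    have hPP2 : PP q (2 * t + 1 - 2) = ∑ j ∈ range t, aa q (2 * t - 1 - 2 * j) * uu q j := by
      rw [PP, show 2 * t + 1 - 2 = 2 * t - 1 by omega, show (2 * t - 1) / 2 + 1 = t by omega]
    have hS2 : ∑ j ∈ range ((2 * t + 1) / 2 + 1),
        (q ^ (4 * j) - q ^ (2 * (2 * t + 1))) * (aa q (2 * t + 1 - 2 * j) * uu q j)
        = q ^ (4 * t + 1) * PP q (2 * t + 1 - 1) + q ^ (4 * t + 2) * PP q (2 * t + 1 - 1)
          + q ^ (4 * t + 1) * PP q (2 * t + 1 - 2) := by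
      rw [show (2 * t + 1) / 2 + 1 = t + 1 by omega, sum_range_succ,
        sum_congr rfl key2, keyLast, hPP1, hPP2]
      rw [sum_add_distrib, sum_add_distrib, ← mul_sum, ← mul_sum, ← mul_sum]
      ring
    rw [hS2, show 2 * (2 * t + 1) - 1 = 4 * t + 1 by omega,
      show 2 * (2 * t + 1) = 4 * t + 2 by omega]
    ring

lemma ll_rec (hq : ‖q‖ < 1) (N : ℕ) (hN : 2 ≤ N) :
    (1 - q ^ (2 * N)) * ll q N = (1 + q ^ (2 * N - 1)) * ll q (N - 1) := by
  rw [ll_eq_PP N (by omega), ll_eq_PP (N - 1) (by omega), show N - 1 - 1 = N - 2 by omega]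
  linear_combination diamond hq N hN

lemma ll_eq_rr (hq : ‖q‖ < 1) : ∀ N, ll q N = rr q N := by
  intro N
  induction N with
  | zero => simp [ll, rr, aa, cc, uu, dd, qPoch]
  | succ M ih =>
    rcases Nat.eq_zero_or_pos M with rfl | hM
    · have h1 : (1 : ℂ) - q ≠ 0 := by
        have := one_sub_ne hq 1 (by omega); rwa [pow_one] at this
      have h2 : (1 : ℂ) - q ^ 2 ≠ 0 := one_sub_ne hq 2 (by omega)
      simp only [ll, rr]
      simp only [sum_range_succ, sum_range_zero]
      norm_num [aa, uu, cc, dd, qPoch]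
      field_simp
      ring
    · have hll : (1 - q ^ (2 * (M + 1))) * ll q (M + 1)
          = (1 + q ^ (2 * M + 1)) * ll q M := by
        have h := ll_rec hq (M + 1) (by omega)
        rwa [show M + 1 - 1 = M by omega, show 2 * (M + 1) - 1 = 2 * M + 1 by omega] at h
      have hrr := rr_rec hq M
      have hne := one_sub_ne hq (2 * (M + 1)) (by omega)
      have : (1 - q ^ (2 * (M + 1))) * ll q (M + 1)
          = (1 - q ^ (2 * (M + 1))) * rr q (M + 1) := by rw [hll, hrr, ih]
      exact mul_left_cancel₀ hne this


def diagE : (Σ N : ℕ, Fin (N + 1)) ≃ ℕ × ℕ where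
  toFun x := (x.2.1, x.1 - x.2.1)
  invFun p := ⟨p.1 + p.2, ⟨p.1, by omega⟩⟩
  left_inv := by
    rintro ⟨N, ⟨k, hk⟩⟩
    obtain ⟨d, rfl⟩ : ∃ d, N = k + d := ⟨N - k, by omega⟩
    dsimp only
    exact Sigma.ext (show k + (k + d - k) = k + d by omega)
      ((Fin.heq_ext_iff (show k + (k + d - k) + 1 = k + d + 1 by omega)).mpr rfl)
  right_inv := by
    rintro ⟨m, n⟩
    simp

lemma norm_one_sub_ge (hq : ‖q‖ < 1) (w : ℂ) (hw : ‖w‖ ≤ ‖q‖) :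
    1 - ‖q‖ ≤ ‖1 - w‖ := by
  calc 1 - ‖q‖ ≤ 1 - ‖w‖ := by linarith
    _ = ‖(1 : ℂ)‖ - ‖w‖ := by rw [norm_one]
    _ ≤ ‖1 - w‖ := norm_sub_norm_le _ _

lemma poch_lower (hq : ‖q‖ < 1) (x : ℂ) (hx : ∀ j : ℕ, ‖x * x ^ j‖ ≤ ‖q‖) (m : ℕ) :
    (1 - ‖q‖) ^ m ≤ ‖qPoch x x m‖ := by
  rw [qPoch, norm_prod]
  calc (1 - ‖q‖) ^ m = ∏ _j ∈ range m, (1 - ‖q‖) := by rw [prod_const, card_range]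
    _ ≤ ∏ j ∈ range m, ‖1 - x * x ^ j‖ := by
        refine prod_le_prod (fun _ _ => by linarith) fun j _ => ?_
        exact norm_one_sub_ge hq _ (hx j)

noncomputable def BB (q : ℂ) (k : ℕ) : ℝ := ‖q‖ ^ (k ^ 2) / (1 - ‖q‖) ^ k

lemma BB_nonneg (hq : ‖q‖ < 1) (k : ℕ) : 0 ≤ BB q k :=
  div_nonneg (pow_nonneg (norm_nonneg q) _) (pow_nonneg (by linarith) _)

lemma BB_summable (hq : ‖q‖ < 1) : Summable (BB q) := by
  have hD : (0 : ℝ) < 1 - ‖q‖ := by linarith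
  refine summable_of_ratio_norm_eventually_le (r := 1 / 2) (by norm_num) ?_
  have ht : Filter.Tendsto (fun k : ℕ => ‖q‖ ^ k) Filter.atTop (nhds 0) :=
    tendsto_pow_atTop_nhds_zero_of_lt_one (norm_nonneg q) hq
  have hev : ∀ᶠ k in Filter.atTop, ‖q‖ ^ k < (1 - ‖q‖) / 2 :=
    ht.eventually_lt_const (by positivity)
  filter_upwards [hev] with k hk
  rw [Real.norm_of_nonneg (BB_nonneg hq _), Real.norm_of_nonneg (BB_nonneg hq _)]
  have h1 : ‖q‖ ^ ((k + 1) ^ 2) = ‖q‖ ^ (k ^ 2) * ‖q‖ ^ (2 * k + 1) := by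
    rw [← pow_add]; congr 1; ring
  have h2 : ‖q‖ ^ (2 * k + 1) ≤ (1 - ‖q‖) / 2 :=
    le_trans (pow_le_pow_of_le_one (norm_nonneg q) hq.le (by omega)) hk.le
  calc BB q (k + 1) = ‖q‖ ^ (k ^ 2) * ‖q‖ ^ (2 * k + 1) / ((1 - ‖q‖) ^ k * (1 - ‖q‖)) := by
        rw [BB, h1, pow_succ (1 - ‖q‖) k]
    _ ≤ ‖q‖ ^ (k ^ 2) * ((1 - ‖q‖) / 2) / ((1 - ‖q‖) ^ k * (1 - ‖q‖)) := by
        gcongr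
    _ = 1 / 2 * BB q k := by
        rw [BB]
        set D := 1 - ‖q‖ with hDdef
        have h4 : D ≠ 0 := ne_of_gt hD
        have h5 : D ^ k ≠ 0 := pow_ne_zero _ h4
        field_simp

lemma BB_prod_summable (hq : ‖q‖ < 1) :
    Summable (fun p : ℕ × ℕ => BB q p.1 * BB q p.2) :=
  (BB_summable hq).mul_of_nonneg (BB_summable hq) (BB_nonneg hq) (BB_nonneg hq)

lemma hx_q (hq : ‖q‖ < 1) : ∀ j : ℕ, ‖q * q ^ j‖ ≤ ‖q‖ := by
  intro j
  rw [← pow_succ', norm_pow]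
  exact pow_le_of_le_one (norm_nonneg q) hq.le (by omega)

lemma hx_pow (hq : ‖q‖ < 1) (k : ℕ) (hk : k ≠ 0) :
    ∀ j : ℕ, ‖q ^ k * (q ^ k) ^ j‖ ≤ ‖q‖ := by
  intro j
  rw [← pow_succ', ← pow_mul, norm_pow]
  exact pow_le_of_le_one (norm_nonneg q) hq.le
    (Nat.mul_ne_zero hk (Nat.succ_ne_zero j))

lemma norm_term_le (hq : ‖q‖ < 1) (E m n : ℕ) (hE : m ^ 2 + n ^ 2 ≤ E) (P1 P2 : ℂ)
    (h1 : (1 - ‖q‖) ^ m ≤ ‖P1‖) (h2 : (1 - ‖q‖) ^ n ≤ ‖P2‖) :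
    ‖q ^ E / (P1 * P2)‖ ≤ BB q m * BB q n := by
  have hD : (0 : ℝ) < 1 - ‖q‖ := by linarith
  rw [norm_div, norm_mul, norm_pow]
  have hnum : ‖q‖ ^ E ≤ ‖q‖ ^ (m ^ 2 + n ^ 2) :=
    pow_le_pow_of_le_one (norm_nonneg q) hq.le hE
  have hden : (1 - ‖q‖) ^ m * (1 - ‖q‖) ^ n ≤ ‖P1‖ * ‖P2‖ :=
    mul_le_mul h1 h2 (pow_nonneg hD.le n) (norm_nonneg P1)
  calc ‖q‖ ^ E / (‖P1‖ * ‖P2‖)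
      ≤ ‖q‖ ^ (m ^ 2 + n ^ 2) / ((1 - ‖q‖) ^ m * (1 - ‖q‖) ^ n) :=
        div_le_div₀ (pow_nonneg (norm_nonneg q) _) hnum (by positivity) hden
    _ = BB q m * BB q n := by rw [BB, BB, div_mul_div_comm, pow_add]

lemma expL_lower (m n : ℕ) :
    m ^ 2 + n ^ 2 ≤ (3 * m ^ 2 + m) / 2 + 2 * m * n + n ^ 2 + 2 * m + 2 * n := by
  have h1 : m ^ 2 ≤ (3 * m ^ 2 + m) / 2 := by
    refine (Nat.le_div_iff_mul_le (by norm_num)).mpr ?_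
    nlinarith
  have h2 : ∀ A B C : ℕ, A ≤ B → A + C ≤ B + 2 * m * n + C + 2 * m + 2 * n := by
    intro A B C h
    omega
  exact h2 _ _ _ h1

lemma expR_lower (m n : ℕ) :
    m ^ 2 + n ^ 2 ≤ 2 * m ^ 2 + 2 * m * n + n ^ 2 + 2 * m + 2 * n := by
  have h2 : ∀ A C : ℕ, A + C ≤ 2 * A + 2 * m * n + C + 2 * m + 2 * n := by
    intro A C
    omega
  exact h2 _ _

lemma summableL (hq : ‖q‖ < 1) :
    Summable (fun p : ℕ × ℕ =>
      q ^ ((3 * p.1 ^ 2 + p.1) / 2 + 2 * p.1 * p.2 + p.2 ^ 2 + 2 * p.1 + 2 * p.2)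
        / (qPoch q q p.1 * qPoch (q ^ 4) (q ^ 4) (p.2 / 2))) := by
  have hD : (0 : ℝ) < 1 - ‖q‖ := by linarith
  refine Summable.of_norm ?_
  refine Summable.of_nonneg_of_le (fun p => norm_nonneg _) ?_ (BB_prod_summable hq)
  rintro ⟨m, n⟩
  refine norm_term_le hq _ m n (expL_lower m n) _ _ (poch_lower hq q (hx_q hq) m) ?_
  calc (1 - ‖q‖) ^ n ≤ (1 - ‖q‖) ^ (n / 2) :=
        pow_le_pow_of_le_one hD.le (by linarith [norm_nonneg q]) (Nat.div_le_self n 2)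
    _ ≤ ‖qPoch (q ^ 4) (q ^ 4) (n / 2)‖ :=
        poch_lower hq (q ^ 4) (hx_pow hq 4 (by omega)) (n / 2)

lemma summableR (hq : ‖q‖ < 1) :
    Summable (fun p : ℕ × ℕ =>
      q ^ (2 * p.1 ^ 2 + 2 * p.1 * p.2 + p.2 ^ 2 + 2 * p.1 + 2 * p.2)
        / (qPoch (q ^ 2) (q ^ 2) p.1 * qPoch (q ^ 2) (q ^ 2) p.2)) := by
  refine Summable.of_norm ?_
  refine Summable.of_nonneg_of_le (fun p => norm_nonneg _) ?_ (BB_prod_summable hq)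
  rintro ⟨m, n⟩
  exact norm_term_le hq _ m n (expR_lower m n) _ _
    (poch_lower hq (q ^ 2) (hx_pow hq 2 (by omega)) m)
    (poch_lower hq (q ^ 2) (hx_pow hq 2 (by omega)) n)

lemma expL_split (k N : ℕ) (hk : k ≤ N) :
    (3 * k ^ 2 + k) / 2 + 2 * k * (N - k) + (N - k) ^ 2 + 2 * k + 2 * (N - k)
      = k * (k + 1) / 2 + (N ^ 2 + 2 * N) := by
  obtain ⟨n, rfl⟩ : ∃ n, N = k + n := ⟨N - k, by omega⟩
  rw [show k + n - k = n by omega]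
  have hdiv : (3 * k ^ 2 + k) / 2 = k * (k + 1) / 2 + k ^ 2 := by
    rw [show 3 * k ^ 2 + k = k * (k + 1) + k ^ 2 * 2 by ring,
      Nat.add_mul_div_right _ _ (by norm_num : 0 < 2)]
  rw [hdiv]
  have hgen : ∀ S : ℕ, S + k ^ 2 + 2 * k * n + n ^ 2 + 2 * k + 2 * n
      = S + ((k + n) ^ 2 + 2 * (k + n)) := by
    intro S
    ring
  exact hgen _

lemma expR_split (k N : ℕ) (hk : k ≤ N) :
    2 * k ^ 2 + 2 * k * (N - k) + (N - k) ^ 2 + 2 * k + 2 * (N - k)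
      = k ^ 2 + (N ^ 2 + 2 * N) := by
  obtain ⟨n, rfl⟩ : ∃ n, N = k + n := ⟨N - k, by omega⟩
  rw [show k + n - k = n by omega]
  ring

lemma diagE_apply (x : Σ N : ℕ, Fin (N + 1)) : diagE x = (x.2.1, x.1 - x.2.1) := rfl

lemma regroup (F : ℕ × ℕ → ℂ) (hF : Summable F) :
    ∑' p : ℕ × ℕ, F p = ∑' N : ℕ, ∑ k ∈ range (N + 1), F (k, N - k) := by
  calc ∑' p : ℕ × ℕ, F p = ∑' x : Σ N : ℕ, Fin (N + 1), F (diagE x) :=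
        (Equiv.tsum_eq diagE F).symm
    _ = ∑' N : ℕ, ∑' k : Fin (N + 1), F (diagE ⟨N, k⟩) :=
        Summable.tsum_sigma (diagE.summable_iff.mpr hF)
    _ = ∑' N : ℕ, ∑ k ∈ range (N + 1), F (k, N - k) := by
        refine tsum_congr fun N => ?_
        rw [tsum_fintype]
        have h1 : ∀ k : Fin (N + 1), F (diagE ⟨N, k⟩) = F (k.1, N - k.1) := fun k => by
          rw [diagE_apply]
        rw [Finset.sum_congr rfl fun k _ => h1 k]
        exact Fin.sum_univ_eq_sum_range (fun i => F (i, N - i)) (N + 1)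

lemma lhs_eq (hq : ‖q‖ < 1) :
    ∑' p : ℕ × ℕ,
        q ^ ((3 * p.1 ^ 2 + p.1) / 2 + 2 * p.1 * p.2 + p.2 ^ 2 + 2 * p.1 + 2 * p.2)
          / (qPoch q q p.1 * qPoch (q ^ 4) (q ^ 4) (p.2 / 2))
      = ∑' N : ℕ, q ^ (N ^ 2 + 2 * N) * ll q N := by
  rw [regroup _ (summableL hq)]
  refine tsum_congr fun N => ?_
  rw [ll, mul_sum]
  refine sum_congr rfl fun k hk => ?_
  simp only [mem_range] at hk
  rw [expL_split k N (by omega), pow_add, aa, uu]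
  ring

lemma rhs_eq (hq : ‖q‖ < 1) :
    ∑' p : ℕ × ℕ,
        q ^ (2 * p.1 ^ 2 + 2 * p.1 * p.2 + p.2 ^ 2 + 2 * p.1 + 2 * p.2)
          / (qPoch (q ^ 2) (q ^ 2) p.1 * qPoch (q ^ 2) (q ^ 2) p.2)
      = ∑' N : ℕ, q ^ (N ^ 2 + 2 * N) * rr q N := by
  rw [regroup _ (summableR hq)]
  refine tsum_congr fun N => ?_
  rw [rr, mul_sum]
  refine sum_congr rfl fun k hk => ?_
  simp only [mem_range] at hk
  rw [expR_split k N (by omega), pow_add, cc, dd]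
  ring


end Stmt7Aux

open Stmt7Aux in
/-- second Göllnitz–Gordon double-sum comparison (limit `N → ∞`). -/
theorem stmt7 (q : ℂ) (hq : ‖q‖ < 1) :
    ∑' p : ℕ × ℕ,
        q ^ ((3 * p.1 ^ 2 + p.1) / 2 + 2 * p.1 * p.2 + p.2 ^ 2 + 2 * p.1 + 2 * p.2)
        / (qPoch q q p.1 * qPoch (q ^ 4) (q ^ 4) (p.2 / 2))
      = ∑' p : ℕ × ℕ,
          q ^ (2 * p.1 ^ 2 + 2 * p.1 * p.2 + p.2 ^ 2 + 2 * p.1 + 2 * p.2)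
          / (qPoch (q ^ 2) (q ^ 2) p.1 * qPoch (q ^ 2) (q ^ 2) p.2) := by
  rw [lhs_eq hq, rhs_eq hq]
  exact tsum_congr fun N => by rw [ll_eq_rr hq N]
end
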